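/- arXiv:1409.5992 — 5 statements merged into one kernel-verified Lean document; each statement's English description precedes it below -/
import Mathlib

section
/- Assume that for every n ≥ 2, every Besicovitch set in ℝⁿ has Hausdorff dimension at least n − 1. Then every Besicovitch set in ℝⁿ has packing dimension (and upper Minkowski dimension) equal to n. -/
open Set Filter MeasureTheory

/-- A Besicovitch set in ℝᵏ: a compact set containing a unit line segment
in every direction. -/
def IsBesicovitch {k : ℕ} (K : Set (EuclideanSpace ℝ (Fin k))) : Prop :=
  IsCompact K ∧ ∀ e : EuclideanSpace ℝ (Fin k), ‖e‖ = 1 →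
    ∃ x, ∀ t ∈ Icc (0 : ℝ) 1, x + t • e ∈ K

/-- Upper Minkowski (box-counting) dimension of a subset of ℝᵏ, via the volume of
`ε`-neighbourhoods: `ubDim A = k - liminf_{ε → 0⁺} log vol(A_ε) / log ε`. -/
noncomputable def ubDim {k : ℕ} (A : Set (EuclideanSpace ℝ (Fin k))) : ℝ :=
  k - liminf (fun ε : ℝ =>
    Real.log ((volume (Metric.thickening ε A)).toReal) / Real.log ε) (nhdsWithin 0 (Ioi 0))

/-- Packing dimension of a subset of ℝᵏ, defined from the upper Minkowski dimension by
countable decompositions. -/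
noncomputable def pdim {k : ℕ} (A : Set (EuclideanSpace ℝ (Fin k))) : ℝ :=
  sInf {r : ℝ | ∃ E : ℕ → Set (EuclideanSpace ℝ (Fin k)),
    A ⊆ ⋃ i, E i ∧ ∀ i, Bornology.IsBounded (E i) ∧ ubDim (E i) ≤ r}

namespace BesiAux

open Metric Bornology ENNReal

noncomputable section

/-! ### Generic Euclidean space facts -/

variable {ι : Type*} [Fintype ι]

lemma vol_thick_ne_top {A : Set (EuclideanSpace ℝ ι)} (hA : IsBounded A) (ε : ℝ) :
    volume (Metric.thickening ε A) ≠ ⊤ :=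
  hA.thickening.measure_lt_top.ne

lemma vol_thick_pos {A : Set (EuclideanSpace ℝ ι)} (hA : A.Nonempty) {ε : ℝ} (hε : 0 < ε) :
    0 < volume (Metric.thickening ε A) := by
  obtain ⟨x, hx⟩ := hA
  have hsub : Metric.ball x ε ⊆ Metric.thickening ε A := fun y hy =>
    Metric.mem_thickening_iff.mpr ⟨x, hx, by simpa [dist_comm] using mem_ball.mp hy⟩
  exact lt_of_lt_of_le (measure_ball_pos volume x hε) (measure_mono hsub)

/-- A bounded set can be covered by finitely many `ε`-balls whose number is controlled by
the volume of the `ε`-thickening. -/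
lemma exists_ball_cover {A : Set (EuclideanSpace ℝ ι)} (hA : IsBounded A) {ε : ℝ} (hε : 0 < ε) :
    ∃ F : Finset (EuclideanSpace ℝ ι), (A ⊆ ⋃ x ∈ F, Metric.ball x ε) ∧
      (F.card : ℝ≥0∞) * volume (Metric.ball (0 : EuclideanSpace ℝ ι) (ε / 2)) ≤
        volume (Metric.thickening ε A) := by
  classical
  set 𝒮 : Set (Set (EuclideanSpace ℝ ι)) :=
    {s | s ⊆ A ∧ s.Pairwise fun x y => ε ≤ dist x y} with h𝒮
  obtain ⟨M, hM⟩ : ∃ M, Maximal (· ∈ 𝒮) M := by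
    apply zorn_subset
    intro c hc hchain
    refine ⟨⋃₀ c, ⟨sUnion_subset fun s hs => (hc hs).1, ?_⟩, fun s hs => subset_sUnion_of_mem hs⟩
    intro x hx y hy hxy
    obtain ⟨s, hs, hxs⟩ := hx
    obtain ⟨t, ht, hyt⟩ := hy
    rcases hchain.total hs ht with hst | hts
    · exact (hc ht).2 (hst hxs) hyt hxy
    · exact (hc hs).2 hxs (hts hyt) hxy
  have hMA : M ⊆ A := hM.prop.1
  have hsep : M.Pairwise fun x y => ε ≤ dist x y := hM.prop.2
  have hdisj : M.PairwiseDisjoint fun x => Metric.ball x (ε / 2) := fun x hx y hy hxy =>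
    Metric.ball_disjoint_ball (by linarith [hsep hx hy hxy])
  have hsub : ∀ x ∈ M, Metric.ball x (ε / 2) ⊆ Metric.thickening ε A := fun x hx y hy =>
    Metric.mem_thickening_iff.mpr
      ⟨x, hMA hx, by have := mem_ball.mp hy; linarith⟩
  -- M is finite
  have hfin : M.Finite := by
    by_contra hinf
    set f := Set.Infinite.natEmbedding M hinf with hf
    have hd2 : Pairwise (Function.onFun Disjoint
        fun k : ℕ => Metric.ball ((f k : EuclideanSpace ℝ ι)) (ε / 2)) := by
      intro i j hij
      exact hdisj (f i).2 (f j).2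
        (fun he => hij (f.injective (Subtype.coe_injective he)))
    have hle : volume (⋃ k : ℕ, Metric.ball ((f k : EuclideanSpace ℝ ι)) (ε / 2))
        ≤ volume (Metric.thickening ε A) :=
      measure_mono (iUnion_subset fun k => hsub _ (f k).2)
    rw [measure_iUnion hd2 fun k => measurableSet_ball] at hle
    have hsame : ∀ k : ℕ, volume (Metric.ball ((f k : EuclideanSpace ℝ ι)) (ε / 2))
        = volume (Metric.ball (0 : EuclideanSpace ℝ ι) (ε / 2)) := fun k =>
      Measure.addHaar_ball_center volume _ _
    rw [tsum_congr hsame, ENNReal.tsum_const_eq_top_of_ne_zero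
      (measure_ball_pos volume (0 : EuclideanSpace ℝ ι) (by linarith)).ne'] at hle
    exact (vol_thick_ne_top hA ε) (top_le_iff.mp hle)
  refine ⟨hfin.toFinset, ?_, ?_⟩
  · -- covering
    intro y hy
    have hyM : ∃ x ∈ M, dist y x < ε := by
      by_contra hcon
      push_neg at hcon
      have hins : insert y M ∈ 𝒮 := by
        refine ⟨insert_subset hy hMA, hsep.insert fun x hx hxy => ?_⟩
        exact ⟨hcon x hx, by rw [dist_comm]; exact hcon x hx⟩
      have hyM : y ∈ M := hM.2 hins (subset_insert y M) (mem_insert y M)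
      have := hcon y hyM
      simp at this
      linarith
    obtain ⟨x, hxM, hxd⟩ := hyM
    exact mem_biUnion (hfin.mem_toFinset.mpr hxM) (mem_ball.mpr hxd)
  · -- counting
    have hdisjF : (↑hfin.toFinset : Set (EuclideanSpace ℝ ι)).PairwiseDisjoint
        fun x => Metric.ball x (ε / 2) := by
      rw [hfin.coe_toFinset]; exact hdisj
    have hcount : ∑ x ∈ hfin.toFinset, volume (Metric.ball x (ε / 2))
        ≤ volume (Metric.thickening ε A) := by
      rw [← measure_biUnion_finset hdisjF fun x _ => measurableSet_ball]
      exact measure_mono (iUnion₂_subset fun x hx => hsub x (hfin.mem_toFinset.mp hx))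
    have hsame : ∀ x ∈ hfin.toFinset, volume (Metric.ball x (ε / 2))
        = volume (Metric.ball (0 : EuclideanSpace ℝ ι) (ε / 2)) := fun x _ =>
      Measure.addHaar_ball_center volume _ _
    rw [Finset.sum_congr rfl hsame, Finset.sum_const, nsmul_eq_mul] at hcount
    exact hcount

/-- Key covering estimate: a polynomial bound on the volume of thickenings bounds the
Hausdorff dimension. -/
lemma dimH_le_of_thick_vol [Nonempty ι] {A : Set (EuclideanSpace ℝ ι)}
    (hA : IsBounded A) {a d : ℝ} (hd : 0 ≤ d)
    (hcard : (Fintype.card ι : ℝ) < a + d)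
    (hvol : ∀ᶠ ε in nhdsWithin (0:ℝ) (Ioi 0),
      volume (Metric.thickening ε A) ≤ ENNReal.ofReal (ε ^ a)) :
    dimH A ≤ ENNReal.ofReal d := by
  classical
  have hnt : Nontrivial (EuclideanSpace ℝ ι) := by
    obtain ⟨i⟩ := ‹Nonempty ι›
    refine ⟨EuclideanSpace.single i (1:ℝ), 0, fun hcon => ?_⟩
    have := congrArg (fun v : EuclideanSpace ℝ ι => v i) hcon
    simp [EuclideanSpace.single_apply] at this
  set κ := Fintype.card ι with hκ
  set V1 := volume (Metric.ball (0 : EuclideanSpace ℝ ι) 1) with hV1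
  have hV1pos : 0 < V1 := measure_ball_pos volume _ one_pos
  have hV1top : V1 ≠ ⊤ := measure_ball_lt_top.ne
  have hV1t : 0 < V1.toReal := ENNReal.toReal_pos hV1pos.ne' hV1top
  obtain ⟨u, hu_anti, hu_pos, hu_lim⟩ := exists_seq_strictAnti_tendsto (0 : ℝ)
  have hu_mem : Tendsto u atTop (nhdsWithin (0:ℝ) (Ioi 0)) :=
    tendsto_nhdsWithin_of_tendsto_nhds_of_eventually_within u hu_lim
      (Eventually.of_forall hu_pos)
  choose F hFcov hFcard using fun k : ℕ => exists_ball_cover hA (hu_pos k)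
  set β := a + d - (κ:ℝ) with hβ
  have hβpos : 0 < β := by rw [hβ]; linarith
  set Cc := (2:ℝ) ^ d * 2 ^ (κ:ℝ) / V1.toReal with hCc
  set g : ℝ → ℝ := fun ε => Cc * ε ^ β with hg
  have hvol' : ∀ᶠ k in atTop, volume (Metric.thickening (u k) A) ≤ ENNReal.ofReal (u k ^ a) :=
    hu_mem.eventually hvol
  have hdiam : ∀ (ε : ℝ), 0 < ε → ∀ x : EuclideanSpace ℝ ι,
      EMetric.diam (Metric.ball x ε) ≤ ENNReal.ofReal (2 * ε) := by
    intro ε hε x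
    rw [← Metric.emetric_ball]
    calc EMetric.diam (EMetric.ball x (ENNReal.ofReal ε)) ≤ 2 * ENNReal.ofReal ε :=
          EMetric.diam_ball
      _ = ENNReal.ofReal (2 * ε) := by
          rw [ENNReal.ofReal_mul (by norm_num : (0:ℝ) ≤ 2)]
          norm_num
  have key : ∀ᶠ k in atTop,
      (∑ i : (F k : Finset (EuclideanSpace ℝ ι)),
        EMetric.diam (Metric.ball (i : EuclideanSpace ℝ ι) (u k)) ^ d)
        ≤ ENNReal.ofReal (g (u k)) := by
    filter_upwards [hvol'] with k hk
    have hε0 : 0 < u k := hu_pos k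
    set ε := u k with hεdef
    set N := (F k).card with hN
    have hb : volume (Metric.ball (0 : EuclideanSpace ℝ ι) (ε / 2))
        = ENNReal.ofReal ((ε / 2) ^ κ) * V1 := by
      rw [Measure.addHaar_ball volume _ (by linarith : (0:ℝ) ≤ ε / 2)]
      rw [finrank_euclideanSpace]
    have hNb : (N : ℝ) * ((ε / 2) ^ κ * V1.toReal) ≤ ε ^ a := by
      have h1 : (N : ℝ≥0∞) * (ENNReal.ofReal ((ε / 2) ^ κ) * V1) ≤ ENNReal.ofReal (ε ^ a) := by
        rw [← hb]; exact le_trans (hFcard k) hk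
      have h2 := ENNReal.toReal_mono ENNReal.ofReal_ne_top h1
      simpa [ENNReal.toReal_mul,
        ENNReal.toReal_ofReal (by positivity : (0:ℝ) ≤ (ε / 2) ^ κ),
        ENNReal.toReal_ofReal (Real.rpow_nonneg hε0.le a)] using h2
    have hNle : (N : ℝ) ≤ ε ^ a / ((ε / 2) ^ κ * V1.toReal) := by
      rw [le_div_iff₀ (by positivity)]
      exact hNb
    have hsum : (∑ i : (F k : Finset (EuclideanSpace ℝ ι)),
        EMetric.diam (Metric.ball (i : EuclideanSpace ℝ ι) ε) ^ d)
        ≤ ENNReal.ofReal ((N : ℝ) * (2 * ε) ^ d) := by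
      have hterm : ∀ i : (F k : Finset (EuclideanSpace ℝ ι)),
          EMetric.diam (Metric.ball (i : EuclideanSpace ℝ ι) ε) ^ d
            ≤ ENNReal.ofReal ((2 * ε) ^ d) := by
        intro i
        calc EMetric.diam (Metric.ball (i : EuclideanSpace ℝ ι) ε) ^ d
            ≤ ENNReal.ofReal (2 * ε) ^ d := ENNReal.rpow_le_rpow (hdiam ε hε0 _) hd
          _ = ENNReal.ofReal ((2 * ε) ^ d) := ENNReal.ofReal_rpow_of_pos (by linarith)
      calc (∑ i : (F k : Finset (EuclideanSpace ℝ ι)),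
          EMetric.diam (Metric.ball (i : EuclideanSpace ℝ ι) ε) ^ d)
          ≤ ∑ _i : (F k : Finset (EuclideanSpace ℝ ι)), ENNReal.ofReal ((2 * ε) ^ d) :=
            Finset.sum_le_sum fun i _ => hterm i
        _ = (N : ℝ≥0∞) * ENNReal.ofReal ((2 * ε) ^ d) := by
            rw [Finset.sum_const, Finset.card_univ, Fintype.card_coe, nsmul_eq_mul]
        _ = ENNReal.ofReal ((N : ℝ) * (2 * ε) ^ d) := by
            rw [ENNReal.ofReal_mul (by positivity), ENNReal.ofReal_natCast]
    refine hsum.trans (ENNReal.ofReal_le_ofReal ?_)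
    have h4 : (N : ℝ) * (2 * ε) ^ d ≤ ε ^ a / ((ε / 2) ^ κ * V1.toReal) * (2 * ε) ^ d :=
      mul_le_mul_of_nonneg_right hNle (Real.rpow_nonneg (by linarith) d)
    refine h4.trans_eq ?_
    have hεκ : ((ε / 2 : ℝ) ^ κ) = ε ^ (κ:ℝ) / 2 ^ (κ:ℝ) := by
      rw [div_pow, ← Real.rpow_natCast ε κ, ← Real.rpow_natCast 2 κ]
    rw [hεκ, Real.mul_rpow (by norm_num : (0:ℝ) ≤ 2) hε0.le]
    show _ = Cc * ε ^ β
    rw [hCc, hβ, Real.rpow_sub hε0, Real.rpow_add hε0]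
    have h5 : V1.toReal ≠ 0 := hV1t.ne'
    have h6 : ε ^ (κ:ℝ) ≠ 0 := (Real.rpow_pos_of_pos hε0 _).ne'
    have h7 : (2:ℝ) ^ (κ:ℝ) ≠ 0 := (Real.rpow_pos_of_pos two_pos _).ne'
    field_simp
  have hcovs : ∀ᶠ k in atTop, A ⊆ ⋃ i : (F k : Finset (EuclideanSpace ℝ ι)),
      Metric.ball (i : EuclideanSpace ℝ ι) (u k) := by
    refine Eventually.of_forall fun k y hy => ?_
    obtain ⟨x, hx, hxy⟩ := mem_iUnion₂.mp (hFcov k hy)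
    exact mem_iUnion.mpr ⟨⟨x, hx⟩, hxy⟩
  have hdiam' : ∀ᶠ k in atTop, ∀ i : (F k : Finset (EuclideanSpace ℝ ι)),
      EMetric.diam (Metric.ball (i : EuclideanSpace ℝ ι) (u k)) ≤ ENNReal.ofReal (2 * u k) :=
    Eventually.of_forall fun k i => hdiam (u k) (hu_pos k) _
  have hr : Tendsto (fun k => ENNReal.ofReal (2 * u k)) atTop (nhds 0) := by
    rw [← ENNReal.ofReal_zero]
    exact ENNReal.tendsto_ofReal (by simpa using hu_lim.const_mul 2)
  have hμ := Measure.hausdorffMeasure_le_liminf_sum (ι := fun k => {x // x ∈ F k}) d A (fun k => ENNReal.ofReal (2 * u k)) hr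
    (fun k i => Metric.ball (i : EuclideanSpace ℝ ι) (u k)) hdiam' hcovs
  have hg0 : Tendsto (fun k => ENNReal.ofReal (g (u k))) atTop (nhds 0) := by
    rw [← ENNReal.ofReal_zero]
    apply ENNReal.tendsto_ofReal
    have h1 : Tendsto (fun x : ℝ => x ^ β) (nhds 0) (nhds ((0:ℝ) ^ β)) :=
      (Real.continuousAt_rpow_const 0 β (Or.inr hβpos.le)).tendsto
    have h2 : Tendsto (fun k => (u k) ^ β) atTop (nhds 0) := by
      have h3 := h1.comp hu_lim
      simpa [Function.comp_def, Real.zero_rpow hβpos.ne'] using h3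
    have h4 := h2.const_mul Cc
    simpa [hg] using h4
  have hzero : μH[d] A = 0 := by
    refine le_antisymm (hμ.trans ?_) zero_le
    rw [← hg0.liminf_eq]
    exact liminf_le_liminf key
  have hzero2 : μH[((d.toNNReal : NNReal) : ℝ)] A = 0 := by
    rw [Real.coe_toNNReal d hd]
    exact hzero
  have hfin2 : μH[((d.toNNReal : NNReal) : ℝ)] A ≠ ⊤ := by
    rw [hzero2]
    exact ENNReal.zero_ne_top
  have hle := dimH_le_of_hausdorffMeasure_ne_top (d := d.toNNReal) hfin2
  exact hle

/-! ### `ubDim` facts -/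

/-- The function whose `liminf` appears in `ubDim`. -/
def mfun {k : ℕ} (A : Set (EuclideanSpace ℝ (Fin k))) (ε : ℝ) : ℝ :=
  Real.log ((volume (Metric.thickening ε A)).toReal) / Real.log ε

/-- The set whose `sSup` is the `liminf` in `ubDim`. -/
def Sset {k : ℕ} (A : Set (EuclideanSpace ℝ (Fin k))) : Set ℝ :=
  {a : ℝ | ∀ᶠ ε in nhdsWithin (0:ℝ) (Ioi 0), a ≤ mfun A ε}

lemma ubDim_eq_sSup {k : ℕ} (A : Set (EuclideanSpace ℝ (Fin k))) :
    ubDim A = k - sSup (Sset A) := by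
  rw [ubDim, Filter.liminf_eq]; rfl

lemma neg_mem_Sset {k : ℕ} {A : Set (EuclideanSpace ℝ (Fin k))}
    (hA : IsBounded A) (hne : A.Nonempty) {c : ℝ} (hc : c < 0) : c ∈ Sset A := by
  have hIoo : ∀ᶠ ε in nhdsWithin (0:ℝ) (Ioi 0), ε ∈ Ioo (0:ℝ) 1 :=
    Ioo_mem_nhdsGT one_pos
  set C := (volume (Metric.thickening 1 A)).toReal with hCdef
  have hC : ∀ᶠ ε in nhdsWithin (0:ℝ) (Ioi 0), Real.log C ≤ c * Real.log ε := by
    have h1 : Tendsto (fun ε : ℝ => c * Real.log ε) (nhdsWithin (0:ℝ) (Ioi 0)) atTop :=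
      (tendsto_const_mul_atTop_of_neg hc).mpr Real.tendsto_log_nhdsGT_zero
    exact h1.eventually_ge_atTop _
  filter_upwards [hIoo, hC] with ε hε hCε
  set V := (volume (Metric.thickening ε A)).toReal with hVdef
  have hVpos : 0 < V := ENNReal.toReal_pos (vol_thick_pos hne hε.1).ne' (vol_thick_ne_top hA ε)
  have hVC : V ≤ C := (ENNReal.toReal_le_toReal (vol_thick_ne_top hA ε)
    (vol_thick_ne_top hA 1)).mpr (measure_mono (Metric.thickening_mono hε.2.le A))
  have hlog : Real.log ε < 0 := Real.log_neg hε.1 hε.2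
  show c ≤ Real.log V / Real.log ε
  rw [le_div_iff_of_neg hlog]
  calc Real.log V ≤ Real.log C :=
        (Real.log_le_log_iff hVpos (lt_of_lt_of_le hVpos hVC)).mpr hVC
    _ ≤ c * Real.log ε := hCε

lemma bddAbove_Sset {k : ℕ} (hk : 0 < k) {A : Set (EuclideanSpace ℝ (Fin k))}
    (hA : IsBounded A) (hne : A.Nonempty) : BddAbove (Sset A) := by
  have hnt : Nontrivial (EuclideanSpace ℝ (Fin k)) := by
    refine ⟨EuclideanSpace.single (⟨0, hk⟩ : Fin k) (1:ℝ), 0, fun hcon => ?_⟩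
    have := congrArg (fun v : EuclideanSpace ℝ (Fin k) => v (⟨0, hk⟩ : Fin k)) hcon
    simp [EuclideanSpace.single_apply] at this
  set c1 := (volume (Metric.ball (0 : EuclideanSpace ℝ (Fin k)) 1)).toReal with hc1def
  have hc1pos : 0 < c1 :=
    ENNReal.toReal_pos
      (measure_ball_pos volume (0 : EuclideanSpace ℝ (Fin k)) one_pos).ne'
      measure_ball_lt_top.ne
  have hev : ∀ᶠ ε in nhdsWithin (0:ℝ) (Ioi 0), mfun A ε ≤ (k:ℝ) + 1 := by
    have hIoo : ∀ᶠ ε in nhdsWithin (0:ℝ) (Ioi 0), ε ∈ Ioo (0:ℝ) 1 :=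
      Ioo_mem_nhdsGT one_pos
    have hlogc : ∀ᶠ ε in nhdsWithin (0:ℝ) (Ioi 0), Real.log ε ≤ Real.log c1 :=
      Real.tendsto_log_nhdsGT_zero.eventually_le_atBot _
    filter_upwards [hIoo, hlogc] with ε hε hlc
    have hlog : Real.log ε < 0 := Real.log_neg hε.1 hε.2
    set V := (volume (Metric.thickening ε A)).toReal with hVdef
    have hVpos : 0 < V := ENNReal.toReal_pos (vol_thick_pos hne hε.1).ne' (vol_thick_ne_top hA ε)
    obtain ⟨x, hx⟩ := hne
    have hball : Metric.ball x ε ⊆ Metric.thickening ε A := fun y hy =>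
      Metric.mem_thickening_iff.mpr ⟨x, hx, by simpa [dist_comm] using mem_ball.mp hy⟩
    have hvb : volume (Metric.ball x ε)
        = ENNReal.ofReal (ε ^ k) * volume (Metric.ball (0 : EuclideanSpace ℝ (Fin k)) 1) := by
      rw [Measure.addHaar_ball volume x hε.1.le]
      simp
    have hVlb : ε ^ k * c1 ≤ V := by
      have h1 : volume (Metric.ball x ε) ≤ volume (Metric.thickening ε A) :=
        measure_mono hball
      rw [hvb] at h1
      have h2 := (ENNReal.toReal_le_toReal
        (ENNReal.mul_ne_top ENNReal.ofReal_ne_top measure_ball_lt_top.ne)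
        (vol_thick_ne_top hA ε)).mpr h1
      simpa [ENNReal.toReal_mul, ENNReal.toReal_ofReal (pow_nonneg hε.1.le k)] using h2
    have hlb : (k:ℝ) * Real.log ε + Real.log c1 ≤ Real.log V := by
      have h3 : Real.log (ε ^ k * c1) ≤ Real.log V :=
        (Real.log_le_log_iff (mul_pos (pow_pos hε.1 k) hc1pos) hVpos).mpr hVlb
      rw [Real.log_mul (pow_pos hε.1 k).ne' hc1pos.ne', Real.log_pow] at h3
      simpa using h3
    show Real.log V / Real.log ε ≤ (k:ℝ) + 1
    rw [div_le_iff_of_neg hlog]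
    calc ((k:ℝ) + 1) * Real.log ε = (k:ℝ) * Real.log ε + Real.log ε := by ring
      _ ≤ (k:ℝ) * Real.log ε + Real.log c1 := by linarith
      _ ≤ Real.log V := hlb
  refine ⟨(k:ℝ) + 1, fun a ha => ?_⟩
  have ha' : ∀ᶠ ε in nhdsWithin (0:ℝ) (Ioi 0), a ≤ mfun A ε := ha
  obtain ⟨ε, h1, h2⟩ := (ha'.and hev).exists
  linarith

lemma sSup_Sset_nonneg {k : ℕ} (hk : 0 < k) {A : Set (EuclideanSpace ℝ (Fin k))}
    (hA : IsBounded A) (hne : A.Nonempty) : 0 ≤ sSup (Sset A) := by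
  by_contra hlt
  push_neg at hlt
  have h1 : sSup (Sset A) / 2 ∈ Sset A := neg_mem_Sset hA hne (by linarith)
  have := le_csSup (bddAbove_Sset hk hA hne) h1
  linarith

lemma ubDim_le_card {k : ℕ} (hk : 0 < k) {A : Set (EuclideanSpace ℝ (Fin k))}
    (hA : IsBounded A) (hne : A.Nonempty) : ubDim A ≤ k := by
  rw [ubDim_eq_sSup]
  have := sSup_Sset_nonneg hk hA hne
  linarith

/-- From an upper bound on `ubDim` extract a volume bound on thickenings. -/
lemma extract {k : ℕ} {A : Set (EuclideanSpace ℝ (Fin k))}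
    (hA : IsBounded A) (hne : A.Nonempty) {r δ : ℝ} (hub : ubDim A ≤ r) (hδ : 0 < δ) :
    ∃ a : ℝ, (k : ℝ) - r - δ < a ∧ ∀ᶠ ε in nhdsWithin (0:ℝ) (Ioi 0),
      volume (Metric.thickening ε A) ≤ ENNReal.ofReal (ε ^ a) := by
  have hS : (Sset A).Nonempty := ⟨-1, neg_mem_Sset hA hne (by norm_num)⟩
  have h0 : (k:ℝ) - sSup (Sset A) ≤ r := by rw [← ubDim_eq_sSup]; exact hub
  have hsup : (k:ℝ) - r - δ < sSup (Sset A) := by linarith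
  obtain ⟨a, haS, hlt⟩ := exists_lt_of_lt_csSup hS hsup
  refine ⟨a, hlt, ?_⟩
  have hIoo : ∀ᶠ ε in nhdsWithin (0:ℝ) (Ioi 0), ε ∈ Ioo (0:ℝ) 1 :=
    Ioo_mem_nhdsGT one_pos
  filter_upwards [haS, hIoo] with ε hfa hε
  set V := (volume (Metric.thickening ε A)).toReal with hVdef
  have hVpos : 0 < V := ENNReal.toReal_pos (vol_thick_pos hne hε.1).ne' (vol_thick_ne_top hA ε)
  have hlog : Real.log ε < 0 := Real.log_neg hε.1 hε.2
  have hfa' : a ≤ Real.log V / Real.log ε := hfa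
  have h1 : Real.log V ≤ a * Real.log ε := (le_div_iff_of_neg hlog).mp hfa'
  have h2 : V ≤ ε ^ a := by
    have h3 := Real.exp_le_exp.mpr h1
    rwa [Real.exp_log hVpos, mul_comm, ← Real.rpow_def_of_pos hε.1] at h3
  calc volume (Metric.thickening ε A) = ENNReal.ofReal V :=
        (ENNReal.ofReal_toReal (vol_thick_ne_top hA ε)).symm
    _ ≤ ENNReal.ofReal (ε ^ a) := ENNReal.ofReal_le_ofReal h2

/-! ### Products -/

variable {m n : ℕ}

/-- Projection onto the `j`-th block of coordinates. -/
def eproj (j : Fin m) (x : EuclideanSpace ℝ (Fin m × Fin n)) : EuclideanSpace ℝ (Fin n) :=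
  WithLp.toLp 2 (fun i => x (j, i))

lemma continuous_eproj (j : Fin m) : Continuous (eproj (n := n) j) :=
  (PiLp.continuous_toLp 2 _).comp (continuous_pi fun i => (continuous_apply (j, i)).comp (PiLp.continuous_ofLp 2 _))

lemma norm_sq_aux {κ : Type*} [Fintype κ] (y : EuclideanSpace ℝ κ) :
    ‖y‖ ^ 2 = ∑ i, ‖y i‖ ^ 2 := by
  rw [EuclideanSpace.norm_eq, Real.sq_sqrt (Finset.sum_nonneg fun i _ => sq_nonneg _)]

lemma norm_sq_eq (x : EuclideanSpace ℝ (Fin m × Fin n)) :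
    ‖x‖ ^ 2 = ∑ j, ‖eproj j x‖ ^ 2 := by
  rw [norm_sq_aux x, Fintype.sum_prod_type]
  exact Finset.sum_congr rfl fun j _ => (norm_sq_aux (eproj j x)).symm

lemma norm_eproj_le (j : Fin m) (x : EuclideanSpace ℝ (Fin m × Fin n)) :
    ‖eproj j x‖ ≤ ‖x‖ := by
  have h2 : ‖eproj j x‖ ^ 2 ≤ ‖x‖ ^ 2 := by
    rw [norm_sq_eq]
    exact Finset.single_le_sum (f := fun i => ‖eproj i x‖ ^ 2)
      (fun i _ => sq_nonneg _) (Finset.mem_univ j)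
  calc ‖eproj j x‖ = Real.sqrt (‖eproj j x‖ ^ 2) := (Real.sqrt_sq (norm_nonneg _)).symm
    _ ≤ Real.sqrt (‖x‖ ^ 2) := Real.sqrt_le_sqrt h2
    _ = ‖x‖ := Real.sqrt_sq (norm_nonneg _)

/-- A "cylinder": product of sets in each block of coordinates. -/
def cyl (T : Fin m → Set (EuclideanSpace ℝ (Fin n))) : Set (EuclideanSpace ℝ (Fin m × Fin n)) :=
  {x | ∀ j, eproj j x ∈ T j}

lemma measurableSet_cyl {T : Fin m → Set (EuclideanSpace ℝ (Fin n))}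
    (hT : ∀ j, MeasurableSet (T j)) : MeasurableSet (cyl T) := by
  have : cyl T = ⋂ j, eproj j ⁻¹' T j := by ext x; simp [cyl]
  rw [this]
  exact MeasurableSet.iInter fun j => (hT j).preimage (continuous_eproj j).measurable

lemma measurePreserving_uncurry :
    MeasurePreserving (fun (y : Fin m → Fin n → ℝ) (p : Fin m × Fin n) => y p.1 p.2)
      volume volume := by
  have hmeas : Measurable (fun (y : Fin m → Fin n → ℝ) (p : Fin m × Fin n) => y p.1 p.2) :=
    measurable_pi_lambda _ fun p => (measurable_pi_apply p.2).comp (measurable_pi_apply p.1)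
  refine ⟨hmeas, ?_⟩
  rw [show (volume : Measure (Fin m × Fin n → ℝ)) = Measure.pi fun _ => volume from rfl]
  refine (Measure.pi_eq fun u hu => ?_).symm
  rw [Measure.map_apply hmeas (MeasurableSet.univ_pi hu)]
  have hpre : (fun (y : Fin m → Fin n → ℝ) (p : Fin m × Fin n) => y p.1 p.2) ⁻¹' univ.pi u
      = univ.pi fun j => univ.pi fun i => u (j, i) := by
    ext y
    simp [Set.mem_pi, Prod.forall]
  rw [hpre, volume_pi_pi]
  simp_rw [volume_pi_pi]
  exact (Fintype.prod_prod_type (f := fun p : Fin m × Fin n => volume (u p))).symm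

lemma vol_cyl (T : Fin m → Set (EuclideanSpace ℝ (Fin n))) (hT : ∀ j, MeasurableSet (T j)) :
    volume (cyl T) = ∏ j, volume (T j) := by
  classical
  have hmc : MeasurableSet (cyl T) := measurableSet_cyl hT
  have h1 : MeasurePreserving (MeasurableEquiv.toLp 2 (Fin m × Fin n → ℝ)) volume volume :=
    (EuclideanSpace.volume_preserving_symm_measurableEquiv_toLp (Fin m × Fin n)).symm
  rw [← h1.measure_preimage hmc.nullMeasurableSet]
  have hmc2 : MeasurableSet
      ((MeasurableEquiv.toLp 2 (Fin m × Fin n → ℝ)) ⁻¹' cyl T) :=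
    hmc.preimage (MeasurableEquiv.measurable _)
  have h2 : MeasurePreserving
      (fun (y : Fin m → Fin n → ℝ) (p : Fin m × Fin n) => y p.1 p.2) volume volume :=
    measurePreserving_uncurry
  rw [← h2.measure_preimage hmc2.nullMeasurableSet]
  have hpre : (fun (y : Fin m → Fin n → ℝ) (p : Fin m × Fin n) => y p.1 p.2) ⁻¹'
      ((MeasurableEquiv.toLp 2 (Fin m × Fin n → ℝ)) ⁻¹' cyl T)
      = univ.pi fun j => (MeasurableEquiv.toLp 2 (Fin n → ℝ)) ⁻¹' T j := by
    ext y
    simp only [mem_preimage, cyl, mem_setOf_eq, Set.mem_pi, mem_univ, forall_true_left,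
      true_implies]
    refine forall_congr' fun j => ?_
    have : eproj j ((MeasurableEquiv.toLp 2 (Fin m × Fin n → ℝ))
        (fun p : Fin m × Fin n => y p.1 p.2))
        = (MeasurableEquiv.toLp 2 (Fin n → ℝ)) (y j) := rfl
    rw [this]
  rw [hpre, volume_pi_pi]
  have h3 := MeasurePreserving.symm (MeasurableEquiv.toLp 2 (Fin n → ℝ)).symm
    (EuclideanSpace.volume_preserving_symm_measurableEquiv_toLp (Fin n))
  exact Finset.prod_congr rfl fun j _ => h3.measure_preimage (hT j).nullMeasurableSet

lemma thick_cyl_subset (T : Fin m → Set (EuclideanSpace ℝ (Fin n))) {ε : ℝ} :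
    Metric.thickening ε (cyl T) ⊆ cyl (fun j => Metric.thickening ε (T j)) := by
  intro z hz j
  obtain ⟨y, hy, hd⟩ := Metric.mem_thickening_iff.mp hz
  refine Metric.mem_thickening_iff.mpr ⟨eproj j y, hy j, lt_of_le_of_lt ?_ hd⟩
  rw [dist_eq_norm, dist_eq_norm]
  have : eproj j z - eproj j y = eproj j (z - y) := by
    ext i; simp [eproj]
  rw [this]
  exact norm_eproj_le _ _

lemma isBounded_cyl {T : Fin m → Set (EuclideanSpace ℝ (Fin n))}
    (hT : ∀ j, IsBounded (T j)) : IsBounded (cyl T) := by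
  have hbd := fun j => isBounded_iff_forall_norm_le.mp (hT j)
  choose C hC using hbd
  refine isBounded_iff_forall_norm_le.mpr ⟨Real.sqrt (∑ j, C j ^ 2), fun x hx => ?_⟩
  have hsq : ‖x‖ ^ 2 ≤ ∑ j, C j ^ 2 := by
    rw [norm_sq_eq]
    exact Finset.sum_le_sum fun j _ =>
      pow_le_pow_left₀ (norm_nonneg _) (hC j _ (hx j)) 2
  calc ‖x‖ = Real.sqrt (‖x‖ ^ 2) := (Real.sqrt_sq (norm_nonneg _)).symm
    _ ≤ Real.sqrt (∑ j, C j ^ 2) := Real.sqrt_le_sqrt hsq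

/-- The `m`-fold product of a Besicovitch set is (isometric to) a Besicovitch set. -/
lemma exists_besicovitch_image (hm : 1 ≤ m) (hn : 2 ≤ n)
    {B : Set (EuclideanSpace ℝ (Fin n))} (hB : IsBesicovitch B) :
    ∃ K : Set (EuclideanSpace ℝ (Fin (m * n))), IsBesicovitch K ∧
      dimH K = dimH (cyl (fun _ : Fin m => B)) := by
  classical
  set bigK := cyl (fun _ : Fin m => B) with hbigK
  have h0n : (0:ℕ) < n := by omega
  have hBne : B.Nonempty := by
    obtain ⟨x₀, hx₀⟩ := hB.2 (EuclideanSpace.single (⟨0, h0n⟩ : Fin n) (1:ℝ))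
      (by rw [EuclideanSpace.norm_single]; norm_num)
    exact ⟨x₀, by simpa using hx₀ 0 ⟨le_refl _, by norm_num⟩⟩
  have hKc : IsCompact bigK := by
    have hclosed : IsClosed bigK := by
      have hrw : bigK = ⋂ j, eproj j ⁻¹' B := by ext x; simp [hbigK, cyl]
      rw [hrw]
      exact isClosed_iInter fun j => hB.1.isClosed.preimage (continuous_eproj j)
    exact Metric.isCompact_of_isClosed_isBounded hclosed
      (isBounded_cyl fun j => hB.1.isBounded)
  have hseg : ∀ e : EuclideanSpace ℝ (Fin m × Fin n), ‖e‖ = 1 →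
      ∃ x, ∀ t ∈ Icc (0:ℝ) 1, x + t • e ∈ bigK := by
    intro e he
    have hej : ∀ j, ‖eproj j e‖ ≤ 1 := fun j => he ▸ norm_eproj_le j e
    have hxj : ∀ j, ∃ xj : EuclideanSpace ℝ (Fin n),
        ∀ t ∈ Icc (0:ℝ) 1, xj + t • eproj j e ∈ B := by
      intro j
      by_cases hz : eproj j e = 0
      · obtain ⟨b, hb⟩ := hBne
        exact ⟨b, fun t _ => by simp [hz, hb]⟩
      · set v := ‖eproj j e‖⁻¹ • eproj j e with hv
        have hnv : ‖v‖ = 1 := by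
          rw [hv, norm_smul, norm_inv, norm_norm,
            inv_mul_cancel₀ (norm_ne_zero_iff.mpr hz)]
        obtain ⟨x, hx⟩ := hB.2 v hnv
        refine ⟨x, fun t ht => ?_⟩
        have h1 : x + t • eproj j e = x + (t * ‖eproj j e‖) • v := by
          congr 1
          rw [hv, smul_smul, mul_assoc,
            mul_inv_cancel₀ (norm_ne_zero_iff.mpr hz), mul_one]
        rw [h1]
        exact hx _ ⟨mul_nonneg ht.1 (norm_nonneg _),
          mul_le_one₀ ht.2 (norm_nonneg _) (hej j)⟩
    choose xs hxs using hxj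
    set X : EuclideanSpace ℝ (Fin m × Fin n) := WithLp.toLp 2 (fun p : Fin m × Fin n => xs p.1 p.2) with hX
    refine ⟨X, fun t ht j => ?_⟩
    have hrw : eproj j (X + t • e) = xs j + t • eproj j e := by
      ext i
      show (X + t • e) (j, i) = xs j i + t * eproj j e i
      simp [hX, eproj, PiLp.add_apply, PiLp.smul_apply]
    show eproj j (X + t • e) ∈ B
    rw [hrw]
    exact hxs j t ht
  set L := LinearIsometryEquiv.piLpCongrLeft 2 ℝ ℝ
    (finProdFinEquiv : Fin m × Fin n ≃ Fin (m * n)) with hLdef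
  refine ⟨L '' bigK, ⟨hKc.image L.continuous, ?_⟩, L.isometry.dimH_image bigK⟩
  intro e' he'
  set e := L.symm e' with he
  have hne : ‖e‖ = 1 := by rw [he, LinearIsometryEquiv.norm_map]; exact he'
  obtain ⟨x, hx⟩ := hseg e hne
  refine ⟨L x, fun t ht => ?_⟩
  have hrw : L x + t • e' = L (x + t • e) := by
    rw [L.map_add, L.map_smul, he, L.apply_symm_apply]
  rw [hrw]
  exact mem_image_of_mem L (hx t ht)

lemma ofReal_prod_of_nonneg {α : Type*} (s : Finset α) (f : α → ℝ) (h : ∀ i ∈ s, 0 ≤ f i) :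
    ENNReal.ofReal (∏ i ∈ s, f i) = ∏ i ∈ s, ENNReal.ofReal (f i) := by
  classical
  induction s using Finset.induction_on with
  | empty => simp
  | insert _ _ hx ih =>
    rename_i x s'
    rw [Finset.prod_insert hx, Finset.prod_insert hx,
      ENNReal.ofReal_mul (h x (Finset.mem_insert_self x s')),
      ih fun i hi => h i (Finset.mem_insert_of_mem hi)]

end

end BesiAux

/-- If for every `k ≥ 2` every Besicovitch set in ℝᵏ has Hausdorff dimension at least
`k - 1`, then every Besicovitch set in ℝⁿ has packing dimension and upper Minkowski
dimension equal to `n`. -/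
theorem besicovitch_pdim_eq_of_dimH_ge
    (h : ∀ k : ℕ, 2 ≤ k → ∀ K : Set (EuclideanSpace ℝ (Fin k)),
      IsBesicovitch K → (k : ENNReal) - 1 ≤ dimH K)
    (n : ℕ) (hn : 2 ≤ n) (B : Set (EuclideanSpace ℝ (Fin n))) (hB : IsBesicovitch B) :
    pdim B = n ∧ ubDim B = n := by
  classical
  have hBbd : Bornology.IsBounded B := hB.1.isBounded
  have h0n : (0:ℕ) < n := by omega
  have hBne : B.Nonempty := by
    obtain ⟨x₀, hx₀⟩ := hB.2 (EuclideanSpace.single (⟨0, h0n⟩ : Fin n) (1:ℝ))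
      (by rw [EuclideanSpace.norm_single]; norm_num)
    exact ⟨x₀, by simpa using hx₀ 0 ⟨le_refl _, by norm_num⟩⟩
  set P : Set ℝ := {r : ℝ | ∃ E : ℕ → Set (EuclideanSpace ℝ (Fin n)),
    B ⊆ ⋃ i, E i ∧ ∀ i, Bornology.IsBounded (E i) ∧ ubDim (E i) ≤ r} with hP
  have hpdim_eq : pdim B = sInf P := rfl
  have hmain : ∀ r ∈ P, (n:ℝ) ≤ r := by
    intro r hr
    obtain ⟨E, hcov, hprop⟩ := hr
    have hstep : ∀ m : ℕ, 1 ≤ m → ∀ δ : ℝ, 0 < δ →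
        ((m:ℝ) * n - 1 : ℝ) ≤ (m:ℝ) * (r + δ) := by
      intro m hm δ hδ
      set d : ℝ := max ((m:ℝ) * (r + δ)) 0 with hd
      have hd0 : 0 ≤ d := le_max_right _ _
      have hex : ∀ i : ℕ, ∃ a : ℝ, ((E i).Nonempty →
          ((n:ℝ) - r - δ < a ∧ ∀ᶠ ε in nhdsWithin (0:ℝ) (Ioi 0),
            volume (Metric.thickening ε (E i)) ≤ ENNReal.ofReal (ε ^ a))) := by
        intro i
        by_cases hi : (E i).Nonempty
        · obtain ⟨a, h1, h2⟩ := BesiAux.extract (hprop i).1 hi (hprop i).2 hδ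
          exact ⟨a, fun _ => ⟨h1, h2⟩⟩
        · exact ⟨0, fun hcon => absurd hcon hi⟩
      choose a ha using hex
      have hpiece : ∀ f : Fin m → ℕ,
          dimH (BesiAux.cyl fun j => E (f j)) ≤ ENNReal.ofReal d := by
        intro f
        by_cases hne : (BesiAux.cyl fun j => E (f j)).Nonempty
        · obtain ⟨x, hx⟩ := hne
          have hEne : ∀ j, (E (f j)).Nonempty := fun j => ⟨BesiAux.eproj j x, hx j⟩
          have hNe : Nonempty (Fin m × Fin n) := ⟨(⟨0, by omega⟩, ⟨0, by omega⟩)⟩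
          refine BesiAux.dimH_le_of_thick_vol
            (BesiAux.isBounded_cyl fun j => (hprop (f j)).1)
            (a := ∑ j : Fin m, a (f j)) hd0 ?_ ?_
          · rw [Fintype.card_prod, Fintype.card_fin, Fintype.card_fin]
            have h2 : (m:ℝ) * ((n:ℝ) - r - δ) < ∑ j : Fin m, a (f j) := by
              have hmpos : 0 < m := by omega
              calc (m:ℝ) * ((n:ℝ) - r - δ) = ∑ _j : Fin m, ((n:ℝ) - r - δ) := by
                    rw [Finset.sum_const, Finset.card_univ, Fintype.card_fin, nsmul_eq_mul]
                _ < ∑ j : Fin m, a (f j) := by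
                    have : Nonempty (Fin m) := ⟨⟨0, by omega⟩⟩
                    exact Finset.sum_lt_sum_of_nonempty Finset.univ_nonempty
                      fun j _ => (ha (f j) (hEne j)).1
            have h3 : (m:ℝ) * (r + δ) ≤ d := le_max_left _ _
            push_cast
            nlinarith [h2, h3]
          · have hall : ∀ᶠ ε in nhdsWithin (0:ℝ) (Ioi 0), ∀ j : Fin m,
                volume (Metric.thickening ε (E (f j))) ≤ ENNReal.ofReal (ε ^ a (f j)) :=
              eventually_all.mpr fun j => (ha (f j) (hEne j)).2
            filter_upwards [hall, eventually_mem_nhdsWithin] with ε hε hε0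
            have hε0' : (0:ℝ) < ε := hε0
            calc volume (Metric.thickening ε (BesiAux.cyl fun j => E (f j)))
                ≤ volume (BesiAux.cyl fun j => Metric.thickening ε (E (f j))) :=
                  measure_mono (BesiAux.thick_cyl_subset _)
              _ = ∏ j, volume (Metric.thickening ε (E (f j))) :=
                  BesiAux.vol_cyl _ fun j => Metric.isOpen_thickening.measurableSet
              _ ≤ ∏ j, ENNReal.ofReal (ε ^ a (f j)) :=
                  Finset.prod_le_prod' fun j _ => hε j
              _ = ENNReal.ofReal (ε ^ (∑ j : Fin m, a (f j))) := by
                  rw [Real.rpow_sum_of_pos hε0' _ _,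
                    BesiAux.ofReal_prod_of_nonneg _ _
                      fun j _ => Real.rpow_nonneg hε0'.le _]
        · rw [not_nonempty_iff_eq_empty.mp hne, dimH_empty]
          exact zero_le
      have hK : dimH (BesiAux.cyl fun _ : Fin m => B) ≤ ENNReal.ofReal d := by
        have hsub : (BesiAux.cyl fun _ : Fin m => B) ⊆
            ⋃ f : Fin m → ℕ, BesiAux.cyl fun j => E (f j) := by
          intro x hx
          choose fi hfi using fun j => mem_iUnion.mp (hcov (hx j))
          exact mem_iUnion.mpr ⟨fi, hfi⟩
        calc dimH (BesiAux.cyl fun _ : Fin m => B)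
            ≤ dimH (⋃ f : Fin m → ℕ, BesiAux.cyl fun j => E (f j)) := dimH_mono hsub
          _ = ⨆ f : Fin m → ℕ, dimH (BesiAux.cyl fun j => E (f j)) := dimH_iUnion _
          _ ≤ ENNReal.ofReal d := iSup_le hpiece
      obtain ⟨K, hKbes, hKdim⟩ := BesiAux.exists_besicovitch_image hm hn hB
      have h2mn : 2 ≤ m * n := le_trans hn (Nat.le_mul_of_pos_left n (by omega))
      have hlow := h (m * n) h2mn K hKbes
      rw [hKdim] at hlow
      have hup : ((m * n : ℕ) : ENNReal) - 1 ≤ ENNReal.ofReal d := hlow.trans hK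
      have hreal : ((m : ℝ) * n) - 1 ≤ d := by
        have h1 : ((m * n : ℕ) : ENNReal) ≤ ENNReal.ofReal d + 1 := tsub_le_iff_right.mp hup
        have h2 : ((m * n : ℕ) : ENNReal) = ENNReal.ofReal ((m * n : ℕ) : ℝ) :=
          (ENNReal.ofReal_natCast _).symm
        rw [h2, ← ENNReal.ofReal_one, ← ENNReal.ofReal_add hd0 zero_le_one] at h1
        have h3 := (ENNReal.ofReal_le_ofReal_iff (by positivity)).mp h1
        push_cast at h3 ⊢
        linarith
      rcases le_or_gt ((m:ℝ) * (r + δ)) 0 with hneg | hposd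
      · exfalso
        rw [hd, max_eq_right hneg] at hreal
        have hm1 : (1:ℝ) ≤ (m:ℝ) := by exact_mod_cast hm
        have hn2 : (2:ℝ) ≤ (n:ℝ) := by exact_mod_cast hn
        nlinarith
      · rw [hd, max_eq_left hposd.le] at hreal
        linarith
    have hstep2 : ∀ m : ℕ, 1 ≤ m → ((m:ℝ) * n - 1) ≤ (m:ℝ) * r := by
      intro m hm
      have hm0 : (0:ℝ) < m := by exact_mod_cast hm
      by_contra hcon
      push_neg at hcon
      set ε := ((m:ℝ) * n - 1 - (m:ℝ) * r) / 2 with hε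
      have hεpos : 0 < ε := by rw [hε]; linarith
      have := hstep m hm (ε / m) (div_pos hεpos hm0)
      rw [mul_add, mul_div_cancel₀ _ hm0.ne'] at this
      rw [hε] at this
      linarith
    by_contra hcon
    push_neg at hcon
    obtain ⟨m, hmgt⟩ := exists_nat_gt (1 / ((n:ℝ) - r))
    have hnr : (0:ℝ) < (n:ℝ) - r := by linarith
    have hm1 : 1 ≤ m := by
      rcases Nat.eq_zero_or_pos m with h0 | h1
      · exfalso
        rw [h0] at hmgt
        simp at hmgt
        have : (0:ℝ) < 1 / ((n:ℝ) - r) := by positivity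
        linarith
      · exact h1
    have h4 := hstep2 m hm1
    have h5 : (1:ℝ) < (m:ℝ) * ((n:ℝ) - r) := by
      rw [div_lt_iff₀ hnr] at hmgt
      linarith [hmgt]
    nlinarith
  have hub_le : ubDim B ≤ (n:ℝ) := BesiAux.ubDim_le_card (by omega) hBbd hBne
  have hmem : ubDim B ∈ P :=
    ⟨fun _ => B, fun x hx => mem_iUnion.mpr ⟨0, hx⟩, fun _ => ⟨hBbd, le_refl _⟩⟩
  have hbdd : BddBelow P := ⟨(n:ℝ), fun r hr => hmain r hr⟩
  have hpdim_le : pdim B ≤ ubDim B := by rw [hpdim_eq]; exact csInf_le hbdd hmem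
  have hpdim_ge : (n:ℝ) ≤ pdim B := by
    rw [hpdim_eq]; exact le_csInf ⟨ubDim B, hmem⟩ hmain
  exact ⟨le_antisymm (hpdim_le.trans hub_le) hpdim_ge,
    le_antisymm hub_le (le_trans hpdim_ge hpdim_le)⟩
end

section
/- If a compact set K ⊆ ℝⁿ satisfies k·pdim(K) < k·n − 1 for some positive integer k, and the k-fold product K^k has Hausdorff dimension at least k·n − 1, then a contradiction follows; equivalently: if every Besicovitch set in ℝ^{kn} has Hausdorff dimension at least kn − 1 for all k, then a Besicovitch set B in ℝⁿ satisfies pdim(B) = n. -/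
open Set Filter MeasureTheory Metric Bornology
set_option maxHeartbeats 1000000

variable {m : ℕ}

variable {m : ℕ}

noncomputable abbrev ballVol (m : ℕ) : ENNReal := volume (Metric.ball (0 : EuclideanSpace ℝ (Fin m)) 1)

lemma ballVol_pos (m : ℕ) : 0 < ballVol m :=
  measure_ball_pos _ _ one_pos

lemma ballVol_ne_top (m : ℕ) : ballVol m ≠ ⊤ :=
  measure_ball_lt_top.ne

lemma vol_ball_eq (hm : 1 ≤ m) (x : EuclideanSpace ℝ (Fin m)) {r : ℝ} (hr : 0 ≤ r) :
    volume (Metric.ball x r) = ENNReal.ofReal (r ^ m) * ballVol m := by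
  have : Nontrivial (EuclideanSpace ℝ (Fin m)) := by
    have : 0 < m := hm
    exact ⟨EuclideanSpace.single ⟨0, this⟩ 1, 0, by
      intro hsingle
      have := congrArg (fun v : EuclideanSpace ℝ (Fin m) => v ⟨0, this⟩) hsingle
      simp [EuclideanSpace.single] at this⟩
  have := Measure.addHaar_ball (volume : Measure (EuclideanSpace ℝ (Fin m))) x hr
  rwa [finrank_euclideanSpace_fin] at this

lemma thickening_vol_lower (hm : 1 ≤ m) {A : Set (EuclideanSpace ℝ (Fin m))} (hA : A.Nonempty)
    {ε : ℝ} (hε : 0 < ε) :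
    ENNReal.ofReal (ε ^ m) * ballVol m ≤ volume (Metric.thickening ε A) := by
  obtain ⟨a, ha⟩ := hA
  have hsub : Metric.ball a ε ⊆ Metric.thickening ε A :=
    Metric.ball_subset_thickening ha ε
  calc ENNReal.ofReal (ε ^ m) * ballVol m = volume (Metric.ball a ε) := (vol_ball_eq hm a hε.le).symm
    _ ≤ _ := measure_mono hsub

lemma thickening_vol_lt_top {A : Set (EuclideanSpace ℝ (Fin m))} (hA : IsBounded A) (ε : ℝ) :
    volume (Metric.thickening ε A) < ⊤ := by
  obtain ⟨R, hR⟩ := (hA.thickening (δ := ε)).subset_closedBall 0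
  exact lt_of_le_of_lt (measure_mono hR) measure_closedBall_lt_top

section ratio
open Real

variable {A : Set (EuclideanSpace ℝ (Fin m))}

noncomputable def ratioFn (A : Set (EuclideanSpace ℝ (Fin m))) : ℝ → ℝ := fun ε =>
  Real.log ((volume (Metric.thickening ε A)).toReal) / Real.log ε

lemma volth_toReal_pos (hm : 1 ≤ m) (hA : A.Nonempty) (hAb : IsBounded A) {ε : ℝ} (hε : 0 < ε) :
    0 < (volume (Metric.thickening ε A)).toReal := by
  have h1 := thickening_vol_lower hm hA hε
  have h2 := thickening_vol_lt_top hAb ε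
  have hpos : 0 < volume (Metric.thickening ε A) :=
    lt_of_lt_of_le (ENNReal.mul_pos (ENNReal.ofReal_pos.2 (pow_pos hε m)).ne' (ballVol_pos m).ne') h1
  exact ENNReal.toReal_pos hpos.ne' h2.ne

lemma ratio_ge (hm : 1 ≤ m) (hA : A.Nonempty) (hAb : IsBounded A) :
    ∀ᶠ ε in nhdsWithin 0 (Ioi 0), Real.log ((volume (Metric.thickening 1 A)).toReal) / Real.log ε
      ≤ ratioFn A ε := by
  filter_upwards [Ioo_mem_nhdsGT_of_mem (Set.mem_Ico.2 ⟨le_refl (0:ℝ), one_pos⟩)] with ε hε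
  obtain ⟨hε0, hε1⟩ := hε
  have hlogneg : Real.log ε < 0 := Real.log_neg hε0 hε1
  apply div_le_div_of_nonpos_of_le hlogneg.le
  apply Real.log_le_log (volth_toReal_pos hm hA hAb hε0)
  apply ENNReal.toReal_mono (thickening_vol_lt_top hAb 1).ne
  exact measure_mono (Metric.thickening_mono hε1.le A)

lemma ratio_le (hm : 1 ≤ m) (hA : A.Nonempty) (hAb : IsBounded A) :
    ∀ᶠ ε in nhdsWithin 0 (Ioi 0),
      ratioFn A ε ≤ (m : ℝ) + Real.log ((ballVol m).toReal) / Real.log ε := by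
  filter_upwards [Ioo_mem_nhdsGT_of_mem (Set.mem_Ico.2 ⟨le_refl (0:ℝ), one_pos⟩)] with ε hε
  obtain ⟨hε0, hε1⟩ := hε
  have hlogneg : Real.log ε < 0 := Real.log_neg hε0 hε1
  have hc : 0 < (ballVol m).toReal := ENNReal.toReal_pos (ballVol_pos m).ne' (ballVol_ne_top m)
  have hlow : ε ^ m * (ballVol m).toReal ≤ (volume (Metric.thickening ε A)).toReal := by
    have := thickening_vol_lower hm hA hε0
    have h2 := (thickening_vol_lt_top hAb ε).ne
    calc ε ^ m * (ballVol m).toReal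
        = ((ENNReal.ofReal (ε ^ m)) * ballVol m).toReal := by
          rw [ENNReal.toReal_mul, ENNReal.toReal_ofReal (by positivity)]
      _ ≤ _ := ENNReal.toReal_mono h2 this
  have hloglow : (m : ℝ) * Real.log ε + Real.log ((ballVol m).toReal)
      ≤ Real.log ((volume (Metric.thickening ε A)).toReal) := by
    have := Real.log_le_log (by positivity) hlow
    rwa [Real.log_mul (by positivity) hc.ne', Real.log_pow] at this
  have := div_le_div_of_nonpos_of_le hlogneg.le hloglow
  calc ratioFn A ε ≤ ((m : ℝ) * Real.log ε + Real.log ((ballVol m).toReal)) / Real.log ε := this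
    _ = (m : ℝ) + Real.log ((ballVol m).toReal) / Real.log ε := by
        rw [add_div, mul_div_cancel_right₀ _ hlogneg.ne]

lemma tendsto_logdiv (C : ℝ) :
    Tendsto (fun ε : ℝ => Real.log C / Real.log ε) (nhdsWithin 0 (Ioi 0)) (nhds 0) := by
  have h1 : Tendsto (fun ε : ℝ => -Real.log ε) (nhdsWithin 0 (Ioi 0)) atTop :=
    tendsto_neg_atBot_atTop.comp Real.tendsto_log_nhdsGT_zero
  have h2 : Tendsto (fun ε : ℝ => (Real.log ε)⁻¹) (nhdsWithin 0 (Ioi 0)) (nhds 0) := by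
    have := (h1.inv_tendsto_atTop).neg
    simp only [Pi.inv_apply, inv_neg, neg_neg, neg_zero] at this
    exact this
  simp only [div_eq_mul_inv]
  simpa using h2.const_mul (Real.log C)

lemma ratio_isBoundedUnder_ge (hm : 1 ≤ m) (hA : A.Nonempty) (hAb : IsBounded A) :
    (nhdsWithin (0:ℝ) (Ioi 0)).IsBoundedUnder (· ≥ ·) (ratioFn A) := by
  refine ⟨-1, eventually_map.2 ?_⟩
  have h1 := ratio_ge hm hA hAb
  have h2 := (tendsto_logdiv ((volume (Metric.thickening 1 A)).toReal)).eventually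
    (eventually_ge_nhds (by norm_num : (-1:ℝ) < 0))
  filter_upwards [h1, h2] with ε he1 he2
  exact le_trans he2 he1

lemma ratio_eventually_le (hm : 1 ≤ m) (hA : A.Nonempty) (hAb : IsBounded A) :
    ∀ᶠ ε in nhdsWithin (0:ℝ) (Ioi 0), ratioFn A ε ≤ (m : ℝ) + 1 := by
  have h1 := ratio_le hm hA hAb
  have h2 := (tendsto_logdiv ((ballVol m).toReal)).eventually
    (eventually_le_nhds (by norm_num : (0:ℝ) < 1))
  filter_upwards [h1, h2] with ε he1 he2
  exact he1.trans (by linarith)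

lemma liminf_ratio_le (hm : 1 ≤ m) (hA : A.Nonempty) (hAb : IsBounded A) :
    liminf (ratioFn A) (nhdsWithin 0 (Ioi 0)) ≤ m := by
  have hg2 : Tendsto (fun ε : ℝ => (m:ℝ) + Real.log ((ballVol m).toReal) / Real.log ε)
      (nhdsWithin 0 (Ioi 0)) (nhds ((m:ℝ) + 0)) :=
    tendsto_const_nhds.add (tendsto_logdiv _)
  have := liminf_le_liminf (ratio_le hm hA hAb) (ratio_isBoundedUnder_ge hm hA hAb)
    (hg2.isCoboundedUnder_ge)
  rwa [hg2.liminf_eq, add_zero] at this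

lemma liminf_ratio_nonneg (hm : 1 ≤ m) (hA : A.Nonempty) (hAb : IsBounded A) :
    0 ≤ liminf (ratioFn A) (nhdsWithin 0 (Ioi 0)) := by
  have hg : Tendsto (fun ε : ℝ => Real.log ((volume (Metric.thickening 1 A)).toReal) / Real.log ε)
      (nhdsWithin 0 (Ioi 0)) (nhds 0) := tendsto_logdiv _
  have hco : (nhdsWithin (0:ℝ) (Ioi 0)).IsCoboundedUnder (· ≥ ·) (ratioFn A) :=
    isCoboundedUnder_ge_of_eventually_le _ (ratio_eventually_le hm hA hAb)
  have := liminf_le_liminf (ratio_ge hm hA hAb) hg.isBoundedUnder_ge hco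
  rwa [hg.liminf_eq] at this
end ratio

section ubdim
variable {A : Set (EuclideanSpace ℝ (Fin m))}

lemma ubDim_eq : ubDim A = m - liminf (ratioFn A) (nhdsWithin 0 (Ioi 0)) := rfl

lemma ubDim_nonneg (hm : 1 ≤ m) (hA : A.Nonempty) (hAb : IsBounded A) : 0 ≤ ubDim A := by
  rw [ubDim_eq]; linarith [liminf_ratio_le hm hA hAb]

lemma ubDim_le_dim (hm : 1 ≤ m) (hA : A.Nonempty) (hAb : IsBounded A) : ubDim A ≤ m := by
  rw [ubDim_eq]; linarith [liminf_ratio_nonneg hm hA hAb]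

lemma ubDim_empty : ubDim (∅ : Set (EuclideanSpace ℝ (Fin m))) = m := by
  rw [ubDim_eq]
  have : ratioFn (∅ : Set (EuclideanSpace ℝ (Fin m))) = fun _ => (0:ℝ) := by
    funext ε
    simp [ratioFn, Metric.thickening_empty]
  rw [this, liminf_const]
  ring

lemma vol_decay (hm : 1 ≤ m) (hA : A.Nonempty) (hAb : IsBounded A) {r δ : ℝ}
    (hub : ubDim A ≤ r) (hδ : 0 < δ) :
    ∀ᶠ ε in nhdsWithin (0:ℝ) (Ioi 0),
      volume (Metric.thickening ε A) ≤ ENNReal.ofReal (ε ^ ((m:ℝ) - r - δ)) := by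
  have hlim : (m:ℝ) - r ≤ liminf (ratioFn A) (nhdsWithin 0 (Ioi 0)) := by
    rw [ubDim_eq] at hub; linarith
  have hlt : (m:ℝ) - r - δ < liminf (ratioFn A) (nhdsWithin 0 (Ioi 0)) := by linarith
  have hev := eventually_lt_of_lt_liminf hlt (ratio_isBoundedUnder_ge hm hA hAb)
  filter_upwards [hev, Ioo_mem_nhdsGT_of_mem (Set.mem_Ico.2 ⟨le_refl (0:ℝ), one_pos⟩)]
    with ε hεr hεm
  obtain ⟨hε0, hε1⟩ := hεm
  have hlogneg : Real.log ε < 0 := Real.log_neg hε0 hε1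
  set q : ℝ := (m:ℝ) - r - δ with hq
  have hvpos : 0 < (volume (Metric.thickening ε A)).toReal := volth_toReal_pos hm hA hAb hε0
  have hloglt : Real.log ((volume (Metric.thickening ε A)).toReal) < q * Real.log ε := by
    have := (lt_div_iff_of_neg hlogneg).1 hεr
    linarith
  have hlt2 : (volume (Metric.thickening ε A)).toReal < ε ^ q := by
    have h2 : q * Real.log ε = Real.log (ε ^ q) := (Real.log_rpow hε0 q).symm
    rw [h2] at hloglt
    have := Real.exp_lt_exp.2 hloglt
    rwa [Real.exp_log hvpos, Real.exp_log (Real.rpow_pos_of_pos hε0 q)] at this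
  calc volume (Metric.thickening ε A)
      = ENNReal.ofReal ((volume (Metric.thickening ε A)).toReal) :=
        (ENNReal.ofReal_toReal (thickening_vol_lt_top hAb ε).ne).symm
    _ ≤ ENNReal.ofReal (ε ^ q) := ENNReal.ofReal_le_ofReal hlt2.le
end ubdim

section cover
variable {A : Set (EuclideanSpace ℝ (Fin m))}

lemma card_bound_of_sep (hm : 1 ≤ m) (hAb : IsBounded A) {ε : ℝ} (hε : 0 < ε)
    {T : Finset (EuclideanSpace ℝ (Fin m))} (hTA : (↑T : Set _) ⊆ A)
    (hsep : ∀ x ∈ T, ∀ y ∈ T, x ≠ y → ε ≤ dist x y) :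
    (T.card : ENNReal) * (ENNReal.ofReal ((ε/2)^m) * ballVol m)
      ≤ volume (Metric.thickening ε A) := by
  have hdisj : (↑T : Set (EuclideanSpace ℝ (Fin m))).PairwiseDisjoint
      (fun t => Metric.ball t (ε/2)) := by
    intro x hx y hy hxy
    apply Metric.ball_disjoint_ball
    rw [← add_div, add_self_div_two]
    exact hsep x hx y hy hxy
  have hsub : ∀ t ∈ T, Metric.ball t (ε/2) ⊆ Metric.thickening ε A := by
    intro t ht
    exact (Metric.ball_subset_ball (by linarith)).trans
      (Metric.ball_subset_thickening (hTA ht) ε)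
  have hmeas := measure_biUnion_finset hdisj (fun t _ => measurableSet_ball)
    (μ := (volume : Measure (EuclideanSpace ℝ (Fin m))))
  have hunion_le : volume (⋃ t ∈ T, Metric.ball t (ε/2)) ≤ volume (Metric.thickening ε A) :=
    measure_mono (Set.iUnion₂_subset hsub)
  rw [hmeas] at hunion_le
  have hball : ∀ t ∈ T, volume (Metric.ball t (ε/2)) = ENNReal.ofReal ((ε/2)^m) * ballVol m :=
    fun t _ => vol_ball_eq hm t (by positivity)
  rw [Finset.sum_congr rfl hball, Finset.sum_const, nsmul_eq_mul] at hunion_le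
  exact hunion_le

lemma exists_cover (hm : 1 ≤ m) (hA : A.Nonempty) (hAb : IsBounded A) {ε : ℝ} (hε : 0 < ε) :
    ∃ T : Finset (EuclideanSpace ℝ (Fin m)), (↑T : Set _) ⊆ A ∧
      (∀ a ∈ A, ∃ t ∈ T, dist a t < ε) ∧
      (T.card : ENNReal) * (ENNReal.ofReal ((ε/2)^m) * ballVol m)
        ≤ volume (Metric.thickening ε A) := by
  classical
  set v : ENNReal := ENNReal.ofReal ((ε/2)^m) * ballVol m with hv
  have hv0 : v ≠ 0 :=
    (ENNReal.mul_pos (ENNReal.ofReal_pos.2 (by positivity)).ne' (ballVol_pos m).ne').ne'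
  have hvtop : v ≠ ⊤ := ENNReal.mul_ne_top ENNReal.ofReal_ne_top (ballVol_ne_top m)
  set V : ENNReal := volume (Metric.thickening ε A) with hV
  have hVtop : V ≠ ⊤ := (thickening_vol_lt_top hAb ε).ne
  set sep : Finset (EuclideanSpace ℝ (Fin m)) → Prop :=
    fun T => (↑T : Set _) ⊆ A ∧ ∀ x ∈ T, ∀ y ∈ T, x ≠ y → ε ≤ dist x y with hsepdef
  have hcard : ∀ T, sep T → T.card ≤ Nat.floor ((V/v).toReal) := by
    intro T hT
    have h1 := card_bound_of_sep hm hAb hε hT.1 hT.2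
    have h2 : (T.card : ENNReal) ≤ V / v := ENNReal.le_div_iff_mul_le (Or.inl hv0)
      (Or.inl hvtop) |>.2 h1
    have h3 : (T.card : ℝ) ≤ (V/v).toReal := by
      have hfin : V / v ≠ ⊤ := (ENNReal.div_lt_top hVtop hv0).ne
      have := ENNReal.toReal_mono hfin h2
      simpa using this
    exact Nat.le_floor h3
  set S : Set ℕ := {c | ∃ T, sep T ∧ T.card = c} with hS
  have hSne : S.Nonempty := ⟨0, ∅, ⟨by simp, by simp⟩, rfl⟩
  have hSbdd : BddAbove S := by
    refine ⟨Nat.floor ((V/v).toReal), ?_⟩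
    rintro c ⟨T, hT, rfl⟩
    exact hcard T hT
  obtain ⟨T, hT, hTcard⟩ : ∃ T, sep T ∧ T.card = sSup S := Nat.sSup_mem hSne hSbdd
  refine ⟨T, hT.1, ?_, card_bound_of_sep hm hAb hε hT.1 hT.2⟩
  intro a ha
  by_contra hcon
  push_neg at hcon
  have haT : a ∉ T := by
    intro haT
    have := hcon a haT
    rw [dist_self] at this
    linarith
  have hsep' : sep (insert a T) := by
    constructor
    · rw [Finset.coe_insert]
      exact Set.insert_subset ha hT.1
    · intro x hx y hy hxy
      rcases Finset.mem_insert.1 hx with heqx | hx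
      · rcases Finset.mem_insert.1 hy with heqy | hy
        · exact absurd (heqx.trans heqy.symm) hxy
        · rw [heqx]; exact hcon y hy
      · rcases Finset.mem_insert.1 hy with heqy | hy
        · rw [heqy, dist_comm]; exact hcon x hx
        · exact hT.2 x hx y hy hxy
  have : (insert a T).card ≤ sSup S := le_csSup hSbdd ⟨_, hsep', rfl⟩
  rw [Finset.card_insert_of_notMem haT, hTcard] at this
  omega
end cover

section proj
variable {k n : ℕ}

noncomputable def proj (i : Fin k) (y : EuclideanSpace ℝ (Fin (k*n))) : EuclideanSpace ℝ (Fin n) :=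
  WithLp.toLp 2 (fun j => y (finProdFinEquiv (i, j)))

noncomputable def glue (x : Fin k → EuclideanSpace ℝ (Fin n)) : EuclideanSpace ℝ (Fin (k*n)) :=
  WithLp.toLp 2 (fun a => x (finProdFinEquiv.symm a).1 (finProdFinEquiv.symm a).2)

@[simp] lemma proj_glue (i : Fin k) (x : Fin k → EuclideanSpace ℝ (Fin n)) :
    proj i (glue x) = x i := by
  ext j
  show x (finProdFinEquiv.symm (finProdFinEquiv (i, j))).1
      (finProdFinEquiv.symm (finProdFinEquiv (i, j))).2 = x i j
  rw [Equiv.symm_apply_apply]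

lemma proj_add (i : Fin k) (y z : EuclideanSpace ℝ (Fin (k*n))) :
    proj i (y + z) = proj i y + proj i z := rfl

lemma proj_smul (i : Fin k) (t : ℝ) (y : EuclideanSpace ℝ (Fin (k*n))) :
    proj i (t • y) = t • proj i y := rfl

lemma dist_sq_eq (y z : EuclideanSpace ℝ (Fin (k*n))) :
    dist y z ^ 2 = ∑ i : Fin k, dist (proj i y) (proj i z) ^ 2 := by
  have h1 : dist y z ^ 2 = ∑ a : Fin (k*n), dist (y a) (z a) ^ 2 := by
    rw [EuclideanSpace.dist_eq]
    rw [Real.sq_sqrt (Finset.sum_nonneg fun a _ => sq_nonneg _)]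
  have h2 : ∀ i : Fin k, dist (proj i y) (proj i z) ^ 2
      = ∑ j : Fin n, dist (y (finProdFinEquiv (i, j))) (z (finProdFinEquiv (i, j))) ^ 2 := by
    intro i
    rw [EuclideanSpace.dist_eq, Real.sq_sqrt (Finset.sum_nonneg fun a _ => sq_nonneg _)]
    rfl
  rw [h1, ← Equiv.sum_comp finProdFinEquiv (fun a => dist (y a) (z a) ^ 2),
    Fintype.sum_prod_type]
  simp only [h2]

lemma proj_dist_le (i : Fin k) (y z : EuclideanSpace ℝ (Fin (k*n))) :
    dist (proj i y) (proj i z) ≤ dist y z := by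
  have h1 : dist (proj i y) (proj i z) ^ 2 ≤ dist y z ^ 2 := by
    rw [dist_sq_eq]
    exact Finset.single_le_sum (f := fun j => dist (proj j y) (proj j z) ^ 2)
      (fun j _ => sq_nonneg _) (Finset.mem_univ i)
  calc dist (proj i y) (proj i z) = Real.sqrt (dist (proj i y) (proj i z) ^ 2) :=
        (Real.sqrt_sq dist_nonneg).symm
    _ ≤ Real.sqrt (dist y z ^ 2) := Real.sqrt_le_sqrt h1
    _ = dist y z := Real.sqrt_sq dist_nonneg

lemma proj_lipschitz (i : Fin k) : LipschitzWith 1 (proj (n := n) i) :=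
  LipschitzWith.of_dist_le_mul fun y z => by
    rw [NNReal.coe_one, one_mul]; exact proj_dist_le i y z

lemma dist_le_of_proj (y z : EuclideanSpace ℝ (Fin (k*n))) {M : ℝ} (hM : 0 ≤ M)
    (h : ∀ i, dist (proj i y) (proj i z) ≤ M) :
    dist y z ≤ Real.sqrt k * M := by
  have h1 : dist y z ^ 2 ≤ k * M ^ 2 := by
    rw [dist_sq_eq]
    calc ∑ i : Fin k, dist (proj i y) (proj i z) ^ 2 ≤ ∑ _i : Fin k, M ^ 2 :=
          Finset.sum_le_sum fun i _ => pow_le_pow_left₀ dist_nonneg (h i) 2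
      _ = k * M ^ 2 := by simp [mul_comm]
  calc dist y z = Real.sqrt (dist y z ^ 2) := (Real.sqrt_sq dist_nonneg).symm
    _ ≤ Real.sqrt (k * M ^ 2) := Real.sqrt_le_sqrt h1
    _ = Real.sqrt k * M := by
        rw [Real.sqrt_mul (Nat.cast_nonneg k), Real.sqrt_sq hM]
end proj

section besico
variable {k n : ℕ}

lemma proj_zero (i : Fin k) : proj (n := n) i 0 = 0 := rfl

lemma besicovitch_nonempty (hn : 1 ≤ n) {B : Set (EuclideanSpace ℝ (Fin n))}
    (hB : IsBesicovitch B) : B.Nonempty := by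
  set u : EuclideanSpace ℝ (Fin n) := EuclideanSpace.single (⟨0, hn⟩ : Fin n) (1:ℝ) with hu
  have hnu : ‖u‖ = 1 := by rw [hu, EuclideanSpace.norm_single]; norm_num
  obtain ⟨x, hx⟩ := hB.2 u hnu
  exact ⟨x, by simpa using hx 0 ⟨le_rfl, zero_le_one⟩⟩

lemma isBesicovitch_prod (hn : 1 ≤ n) {B : Set (EuclideanSpace ℝ (Fin n))}
    (hB : IsBesicovitch B) (hk : 1 ≤ k) :
    IsBesicovitch {y : EuclideanSpace ℝ (Fin (k*n)) | ∀ i, proj i y ∈ B} := by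
  obtain ⟨b, hbB⟩ := besicovitch_nonempty hn hB
  set K := {y : EuclideanSpace ℝ (Fin (k*n)) | ∀ i, proj i y ∈ B} with hK
  constructor
  · -- compact
    have hKcl : IsClosed K := by
      have : K = ⋂ i, proj i ⁻¹' B := by
        ext y; simp [hK, Set.mem_iInter]
      rw [this]
      exact isClosed_iInter fun i => hB.1.isClosed.preimage (proj_lipschitz i).continuous
    obtain ⟨R, hR⟩ := hB.1.isBounded.subset_closedBall 0
    have hR' : B ⊆ Metric.closedBall 0 (max R 0) :=
      hR.trans (Metric.closedBall_subset_closedBall (le_max_left _ _))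
    have hKb : Bornology.IsBounded K := by
      apply Metric.isBounded_closedBall.subset (?_ : K ⊆ Metric.closedBall 0 (Real.sqrt k * max R 0))
      intro y hy
      rw [Metric.mem_closedBall]
      apply dist_le_of_proj y 0 (le_max_right _ _)
      intro i
      rw [proj_zero]
      exact Metric.mem_closedBall.1 (hR' (hy i))
    exact isCompact_of_isClosed_isBounded hKcl hKb
  · intro e he
    set v : Fin k → EuclideanSpace ℝ (Fin n) := fun i => proj i e with hv
    have hvle : ∀ i, ‖v i‖ ≤ 1 := by
      intro i
      have := proj_dist_le i e 0
      rw [proj_zero, dist_zero_right, dist_zero_right, he] at this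
      exact this
    have hex : ∀ i, ∃ x, ∀ t ∈ Icc (0:ℝ) 1, x + t • v i ∈ B := by
      intro i
      by_cases hvi : v i = 0
      · exact ⟨b, fun t _ => by simp [hvi, hbB]⟩
      · have hnv : 0 < ‖v i‖ := norm_pos_iff.2 hvi
        set u : EuclideanSpace ℝ (Fin n) := ‖v i‖⁻¹ • v i with hu
        have hnu : ‖u‖ = 1 := by
          rw [hu, norm_smul, norm_inv, norm_norm, inv_mul_cancel₀ hnv.ne']
        obtain ⟨x, hx⟩ := hB.2 u hnu
        refine ⟨x, fun t ht => ?_⟩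
        have h1 : x + t • v i = x + (t * ‖v i‖) • u := by
          rw [hu, smul_smul, mul_assoc, mul_inv_cancel₀ hnv.ne', mul_one]
        rw [h1]
        exact hx _ ⟨mul_nonneg ht.1 hnv.le, mul_le_one₀ ht.2 hnv.le (hvle i)⟩
    choose x hx using hex
    refine ⟨glue x, fun t ht i => ?_⟩
    show proj i (glue x + t • e) ∈ B
    rw [proj_add, proj_smul, proj_glue]
    exact hx i t ht
end besico

section main
variable {k n : ℕ}

lemma tendsto_rpow_zero {γ : ℝ} (hγ : 0 < γ) :
    Tendsto (fun ε : ℝ => ε ^ γ) (nhdsWithin 0 (Ioi 0)) (nhds 0) := by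
  have h1 : Tendsto (fun ε : ℝ => Real.exp (Real.log ε * γ)) (nhdsWithin 0 (Ioi 0)) (nhds 0) := by
    apply Real.tendsto_exp_atBot.comp
    exact Filter.Tendsto.atBot_mul_const hγ Real.tendsto_log_nhdsGT_zero
  apply h1.congr'
  filter_upwards [self_mem_nhdsWithin] with ε (hε : 0 < ε)
  rw [Real.rpow_def_of_pos hε]

noncomputable def coverSet (hn : 1 ≤ n) (A : Set (EuclideanSpace ℝ (Fin n))) (hA : A.Nonempty)
    (hAb : IsBounded A) (ε : ℝ) : Finset (EuclideanSpace ℝ (Fin n)) :=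
  if h : 0 < ε then (exists_cover hn hA hAb h).choose else ∅

lemma coverSet_spec (hn : 1 ≤ n) (A : Set (EuclideanSpace ℝ (Fin n))) (hA : A.Nonempty)
    (hAb : IsBounded A) {ε : ℝ} (hε : 0 < ε) :
    (↑(coverSet hn A hA hAb ε) : Set _) ⊆ A ∧
      (∀ a ∈ A, ∃ t ∈ coverSet hn A hA hAb ε, dist a t < ε) ∧
      ((coverSet hn A hA hAb ε).card : ENNReal) * (ENNReal.ofReal ((ε/2)^n) * ballVol n)
        ≤ volume (Metric.thickening ε A) := by
  rw [coverSet, dif_pos hε]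
  exact (exists_cover hn hA hAb hε).choose_spec

lemma dimH_prod_le (hn : 1 ≤ n) (hk : 1 ≤ k)
    (A : Fin k → Set (EuclideanSpace ℝ (Fin n)))
    (hAne : ∀ i, (A i).Nonempty) (hAb : ∀ i, IsBounded (A i))
    {r s : ℝ} (hr0 : 0 ≤ r) (hub : ∀ i, ubDim (A i) ≤ r) (hs : (k:ℝ) * r < s) :
    dimH {y : EuclideanSpace ℝ (Fin (k*n)) | ∀ i, proj i y ∈ A i} ≤ ENNReal.ofReal s := by
  classical
  set l := nhdsWithin (0:ℝ) (Ioi 0) with hl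
  have hk0 : (0:ℝ) < k := by exact_mod_cast hk
  have hs0 : 0 < s := lt_of_le_of_lt (by positivity) hs
  set δ : ℝ := (s - k*r)/(2*k) with hδdef
  have hδ : 0 < δ := by rw [hδdef]; apply div_pos <;> linarith
  clear_value δ
  set q : ℝ := (n:ℝ) - r - δ with hq
  clear_value q
  set c : ℝ := (ballVol n).toReal with hc
  have hcpos : 0 < c := by
    rw [hc]; exact ENNReal.toReal_pos (ballVol_pos n).ne' (ballVol_ne_top n)
  set P := {y : EuclideanSpace ℝ (Fin (k*n)) | ∀ i, proj i y ∈ A i} with hP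
  set 𝒯 : ℝ → Fin k → Finset (EuclideanSpace ℝ (Fin n)) := fun ε i =>
    coverSet hn (A i) (hAne i) (hAb i) ε with h𝒯
  have hTcov : ∀ {ε : ℝ}, 0 < ε → ∀ i, ∀ a ∈ A i, ∃ t ∈ 𝒯 ε i, dist a t < ε := by
    intro ε hε i
    exact (coverSet_spec hn (A i) (hAne i) (hAb i) hε).2.1
  have hTcard : ∀ {ε : ℝ}, 0 < ε → ∀ i,
      ((𝒯 ε i).card : ENNReal) * (ENNReal.ofReal ((ε/2)^n) * ballVol n)
        ≤ volume (Metric.thickening ε (A i)) := by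
    intro ε hε i
    exact (coverSet_spec hn (A i) (hAne i) (hAb i) hε).2.2
  clear_value 𝒯
  set t : ∀ ε : ℝ, (∀ i : Fin k, {x // x ∈ 𝒯 ε i}) → Set (EuclideanSpace ℝ (Fin (k*n))) :=
    fun ε σ => {y | ∀ i, dist (proj i y) (σ i : EuclideanSpace ℝ (Fin n)) < ε} with ht
  -- diameters
  have hdiam : ∀ {ε : ℝ}, 0 < ε → ∀ σ, EMetric.diam (t ε σ)
      ≤ ENNReal.ofReal (Real.sqrt k * (2*ε)) := by
    intro ε hε σ
    apply EMetric.diam_le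
    intro y hy z hz
    rw [edist_dist]
    apply ENNReal.ofReal_le_ofReal
    apply dist_le_of_proj y z (by positivity)
    intro i
    calc dist (proj i y) (proj i z)
        ≤ dist (proj i y) (σ i : EuclideanSpace ℝ (Fin n))
          + dist (σ i : EuclideanSpace ℝ (Fin n)) (proj i z) := dist_triangle _ _ _
      _ ≤ ε + ε := by
          refine add_le_add (hy i).le ?_
          rw [dist_comm]; exact (hz i).le
      _ = 2*ε := by ring
  have hcover : ∀ᶠ ε in l, P ⊆ ⋃ σ, t ε σ := by
    filter_upwards [self_mem_nhdsWithin] with ε (hε : 0 < ε)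
    intro y hy
    have hch : ∀ i : Fin k, ∃ x ∈ 𝒯 ε i, dist (proj i y) x < ε :=
      fun i => hTcov hε i (proj i y) (hy i)
    choose tt htt hdist using hch
    exact Set.mem_iUnion.2 ⟨fun i => ⟨tt i, htt i⟩, fun i => hdist i⟩
  clear_value t
  -- the measure bound
  have hmeas : μH[s] P ≤ 0 := by
    have hradii : Tendsto (fun ε : ℝ => ENNReal.ofReal (Real.sqrt k * (2*ε))) l (nhds 0) := by
      have h1 : Tendsto (fun ε : ℝ => Real.sqrt k * (2*ε)) l (nhds 0) := by
        have h2 : Tendsto (fun ε : ℝ => Real.sqrt k * (2*ε)) (nhds 0)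
            (nhds (Real.sqrt k * (2*0))) :=
          (continuous_const.mul (continuous_const.mul continuous_id)).tendsto 0
        rw [mul_zero, mul_zero] at h2
        exact h2.mono_left nhdsWithin_le_nhds
      have := ENNReal.tendsto_ofReal h1
      simpa using this
    have hdiam' : ∀ᶠ ε in l, ∀ σ, EMetric.diam (t ε σ)
        ≤ ENNReal.ofReal (Real.sqrt k * (2*ε)) := by
      filter_upwards [self_mem_nhdsWithin] with ε (hε : 0 < ε)
      exact fun σ => hdiam hε σ
    have hmain := Measure.hausdorffMeasure_le_liminf_tsum (X := EuclideanSpace ℝ (Fin (k*n))) s P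
      (l := l) (fun ε => ENNReal.ofReal (Real.sqrt k * (2*ε))) hradii t hdiam' hcover
    refine hmain.trans ?_
    set γ : ℝ := (q - n)*k + s with hγdef
    have hγ : 0 < γ := by
      have h1 : γ = (s - k*r)/2 := by
        rw [hγdef, hq, hδdef]; field_simp; ring
      rw [h1]; linarith
    clear_value γ
    set C : ℝ := ((2:ℝ)^n/c)^k * (Real.sqrt k * 2)^s with hCdef
    clear_value C
    set G : ℝ → ℝ := fun ε => C * ε ^ γ with hG
    have hGt : Tendsto G l (nhds 0) := by
      rw [hG]
      have := (tendsto_rpow_zero hγ).const_mul C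
      simpa using this
    have hbound : ∀ᶠ ε in l, (∑' σ : (∀ i : Fin k, {x // x ∈ 𝒯 ε i}),
        EMetric.diam (t ε σ) ^ s) ≤ ENNReal.ofReal (G ε) := by
      have hdecay : ∀ᶠ ε in l, ∀ i, volume (Metric.thickening ε (A i))
          ≤ ENNReal.ofReal (ε ^ q) := by
        rw [hl]
        apply eventually_all.2
        intro i
        have := vol_decay hn (hAne i) (hAb i) (hub i) hδ
        rw [← hq] at this
        exact this
      filter_upwards [hdecay, self_mem_nhdsWithin] with ε hdec (hε : 0 < ε)
      -- card bound in ℝ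
      set N : ℝ := ε ^ q / ((ε/2)^n * c) with hN
      have hNpos : 0 < N := by
        rw [hN]
        apply div_pos (Real.rpow_pos_of_pos hε q)
        positivity
      have hcard : ∀ i, (((𝒯 ε i).card : ℝ)) ≤ N := by
        intro i
        have h1 := (hTcard hε i).trans (hdec i)
        have h2 : (((𝒯 ε i).card : ENNReal) * (ENNReal.ofReal ((ε/2)^n) * ballVol n)).toReal
            = ((𝒯 ε i).card : ℝ) * ((ε/2)^n * c) := by
          rw [ENNReal.toReal_mul, ENNReal.toReal_mul, ENNReal.toReal_natCast,
            ENNReal.toReal_ofReal (by positivity), hc]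
        have h3 : (((𝒯 ε i).card : ENNReal) * (ENNReal.ofReal ((ε/2)^n) * ballVol n)).toReal
            ≤ ε ^ q := by
          apply ENNReal.toReal_le_of_le_ofReal (Real.rpow_nonneg hε.le q) h1
        rw [h2] at h3
        rw [hN, le_div_iff₀ (by positivity)]
        exact h3
      clear_value N
      -- sum bound
      calc (∑' σ : (∀ i : Fin k, {x // x ∈ 𝒯 ε i}), EMetric.diam (t ε σ) ^ s)
          = ∑ σ : (∀ i : Fin k, {x // x ∈ 𝒯 ε i}), EMetric.diam (t ε σ) ^ s := tsum_fintype _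
        _ ≤ ∑ _σ : (∀ i : Fin k, {x // x ∈ 𝒯 ε i}),
            ENNReal.ofReal (Real.sqrt k * (2*ε)) ^ s := by
            apply Finset.sum_le_sum
            intro σ _
            exact ENNReal.rpow_le_rpow (hdiam hε σ) hs0.le
        _ = (Fintype.card (∀ i : Fin k, {x // x ∈ 𝒯 ε i}) : ENNReal)
            * ENNReal.ofReal (Real.sqrt k * (2*ε)) ^ s := by
            rw [Finset.sum_const, nsmul_eq_mul, Finset.card_univ]
        _ ≤ ENNReal.ofReal (N ^ k) * ENNReal.ofReal ((Real.sqrt k * (2*ε)) ^ s) := by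
            apply mul_le_mul'
            · rw [Fintype.card_pi]
              have hcc : ∀ i : Fin k, (Fintype.card {x // x ∈ 𝒯 ε i} : ENNReal)
                  ≤ ENNReal.ofReal N := by
                intro i
                rw [Fintype.card_coe, ← ENNReal.ofReal_natCast]
                exact ENNReal.ofReal_le_ofReal (hcard i)
              calc ((∏ i : Fin k, Fintype.card {x // x ∈ 𝒯 ε i} : ℕ) : ENNReal)
                  = ∏ i : Fin k, (Fintype.card {x // x ∈ 𝒯 ε i} : ENNReal) := by
                    rw [Nat.cast_prod]
                _ ≤ ∏ _i : Fin k, ENNReal.ofReal N := Finset.prod_le_prod' fun i _ => hcc i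
                _ = ENNReal.ofReal N ^ k := by rw [Finset.prod_const, Finset.card_univ,
                    Fintype.card_fin]
                _ = ENNReal.ofReal (N ^ k) := by rw [ENNReal.ofReal_pow hNpos.le]
            · rw [ENNReal.ofReal_rpow_of_pos (by positivity)]
        _ = ENNReal.ofReal (N ^ k * (Real.sqrt k * (2*ε)) ^ s) := by
            rw [ENNReal.ofReal_mul (by positivity)]
        _ ≤ ENNReal.ofReal (G ε) := by
            apply ENNReal.ofReal_le_ofReal
            apply le_of_eq
            have hεn : (ε:ℝ) ^ (n:ℕ) = ε ^ ((n:ℕ):ℝ) := (Real.rpow_natCast ε n).symm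
            have hNval : N = ((2:ℝ)^n/c) * ε ^ (q - n) := by
              rw [hN, div_pow, Real.rpow_sub hε, ← hεn]
              have hεn0 : (0:ℝ) < ε ^ n := by positivity
              field_simp
            have hN2 : N ^ k = ((2:ℝ)^n/c)^k * ε ^ ((q - n)*k) := by
              rw [hNval, mul_pow, ← Real.rpow_natCast (ε ^ (q - (n:ℝ))) k,
                ← Real.rpow_mul hε.le]
            have hsqrt : (Real.sqrt k * (2*ε)) ^ s = (Real.sqrt k * 2)^s * ε ^ s := by
              rw [show Real.sqrt k * (2*ε) = (Real.sqrt k * 2) * ε by ring,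
                Real.mul_rpow (by positivity) hε.le]
            rw [hN2, hsqrt]
            simp only [hG]
            rw [hγdef, Real.rpow_add hε, hCdef]
            ring
    clear_value G
    calc liminf (fun ε => ∑' σ : (∀ i : Fin k, {x // x ∈ 𝒯 ε i}),
            EMetric.diam (t ε σ) ^ s) l
        ≤ liminf (fun ε => ENNReal.ofReal (G ε)) l := liminf_le_liminf hbound
      _ = 0 := by
          have := (ENNReal.tendsto_ofReal (α := ℝ) hGt).liminf_eq
          simpa using this
  -- conclude
  have hzero : μH[s] P = 0 := le_antisymm hmeas zero_le
  have hds : ((s.toNNReal : NNReal) : ℝ) = s := Real.coe_toNNReal s hs0.le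
  have hfin : dimH P ≤ (s.toNNReal : ENNReal) := by
    apply dimH_le_of_hausdorffMeasure_ne_top
    rw [hds, hzero]
    exact ENNReal.zero_ne_top
  have hofReal : ENNReal.ofReal s = (s.toNNReal : ENNReal) := rfl
  rw [hP] at hfin
  rw [hofReal]
  exact hfin
end main

/-- If for every `k ≥ 1` every Besicovitch set in `ℝ^{k·n}` has Hausdorff dimension at
least `k·n − 1`, then every Besicovitch set `B` in ℝⁿ has packing dimension `n`. -/
theorem besicovitch_pdim_eq_dim
    (n : ℕ) (hn : 2 ≤ n)
    (h : ∀ k : ℕ, 1 ≤ k → ∀ K : Set (EuclideanSpace ℝ (Fin (k * n))),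
      IsBesicovitch K → ((k * n : ℕ) : ENNReal) - 1 ≤ dimH K)
    (B : Set (EuclideanSpace ℝ (Fin n))) (hB : IsBesicovitch B) :
    pdim B = n := by
  have hn1 : 1 ≤ n := le_trans one_le_two hn
  have hBne : B.Nonempty := besicovitch_nonempty hn1 hB
  have hBb : IsBounded B := hB.1.isBounded
  set S : Set ℝ := {r : ℝ | ∃ E : ℕ → Set (EuclideanSpace ℝ (Fin n)),
    B ⊆ ⋃ i, E i ∧ ∀ i, Bornology.IsBounded (E i) ∧ ubDim (E i) ≤ r} with hS
  have hSnonneg : ∀ r ∈ S, 0 ≤ r := by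
    rintro r ⟨E, hcov, hprop⟩
    obtain ⟨b, hb⟩ := hBne
    obtain ⟨i₀, hi₀⟩ := Set.mem_iUnion.1 (hcov hb)
    exact le_trans (ubDim_nonneg hn1 ⟨b, hi₀⟩ (hprop i₀).1) (hprop i₀).2
  have hSbdd : BddBelow S := ⟨0, fun r hr => hSnonneg r hr⟩
  have hSmem : (n:ℝ) ∈ S :=
    ⟨fun _ => B, Set.subset_iUnion (fun _ : ℕ => B) 0,
      fun _ => ⟨hBb, ubDim_le_dim hn1 hBne hBb⟩⟩
  have hple : pdim B ≤ n := csInf_le hSbdd hSmem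
  rcases lt_or_ge (pdim B) (n:ℝ) with hlt | hge
  · exfalso
    obtain ⟨r, hrS, hrn⟩ := exists_lt_of_csInf_lt ⟨_, hSmem⟩ hlt
    have hr0 : 0 ≤ r := hSnonneg r hrS
    obtain ⟨E, hcov, hprop⟩ := hrS
    have hEne : ∀ i, (E i).Nonempty := by
      intro i
      rcases Set.eq_empty_or_nonempty (E i) with hemp | hne
      · exfalso
        have := (hprop i).2
        rw [hemp, ubDim_empty] at this
        linarith
      · exact hne
    -- choose k
    set k : ℕ := max 1 ⌈2/((n:ℝ)-r)⌉₊ with hkdef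
    have hk : 1 ≤ k := le_max_left _ _
    have hk0 : (0:ℝ) < k := by exact_mod_cast hk
    have hnr : (0:ℝ) < (n:ℝ) - r := by linarith
    have hkr : 2 ≤ (k:ℝ) * ((n:ℝ) - r) := by
      have h1 : 2/((n:ℝ)-r) ≤ (⌈2/((n:ℝ)-r)⌉₊ : ℝ) := Nat.le_ceil _
      have h2 : (⌈2/((n:ℝ)-r)⌉₊ : ℝ) ≤ (k:ℝ) := by
        exact_mod_cast le_max_right 1 ⌈2/((n:ℝ)-r)⌉₊
      have h3 : 2/((n:ℝ)-r) ≤ (k:ℝ) := le_trans h1 h2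
      calc (2:ℝ) = (2/((n:ℝ)-r)) * ((n:ℝ)-r) := by field_simp
        _ ≤ (k:ℝ) * ((n:ℝ)-r) := by
            apply mul_le_mul_of_nonneg_right h3 hnr.le
    have hkn1 : (1:ℝ) < (k:ℝ)*(n:ℝ) - (k:ℝ)*r := by nlinarith
    set s : ℝ := ((k:ℝ)*r + ((k:ℝ)*(n:ℝ)-1))/2 with hsdef
    have hs1 : (k:ℝ)*r < s := by rw [hsdef]; linarith
    have hs2 : s < (k:ℝ)*(n:ℝ)-1 := by rw [hsdef]; linarith
    -- the Besicovitch product set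
    set K : Set (EuclideanSpace ℝ (Fin (k*n))) := {y | ∀ i, proj i y ∈ B} with hKdef
    have hKbes : IsBesicovitch K := isBesicovitch_prod hn1 hB hk
    have hlow := h k hk K hKbes
    -- upper bound on dimH K
    have hKsub : K ⊆ ⋃ σ : Fin k → ℕ, {y : EuclideanSpace ℝ (Fin (k*n)) |
        ∀ i, proj i y ∈ E (σ i)} := by
      intro y hy
      have hch : ∀ i : Fin k, ∃ j : ℕ, proj i y ∈ E j :=
        fun i => Set.mem_iUnion.1 (hcov (hy i))
      choose σ hσ using hch
      exact Set.mem_iUnion.2 ⟨σ, hσ⟩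
    have hup : dimH K ≤ ENNReal.ofReal s := by
      calc dimH K ≤ dimH (⋃ σ : Fin k → ℕ, {y : EuclideanSpace ℝ (Fin (k*n)) |
            ∀ i, proj i y ∈ E (σ i)}) := dimH_mono hKsub
        _ = ⨆ σ : Fin k → ℕ, dimH {y : EuclideanSpace ℝ (Fin (k*n)) |
            ∀ i, proj i y ∈ E (σ i)} := dimH_iUnion _
        _ ≤ ENNReal.ofReal s := by
            apply iSup_le
            intro σ
            exact dimH_prod_le hn1 hk (fun i => E (σ i)) (fun i => hEne (σ i))
              (fun i => (hprop (σ i)).1) hr0 (fun i => (hprop (σ i)).2) hs1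
    -- contradiction
    have hcast : ((k * n : ℕ) : ENNReal) - 1 = ENNReal.ofReal ((k:ℝ)*(n:ℝ) - 1) := by
      rw [← ENNReal.ofReal_natCast (k*n), ← ENNReal.ofReal_one, ← ENNReal.ofReal_sub _ one_pos.le]
      congr 1
      push_cast
      ring
    have hmn1 : (0:ℝ) < (k:ℝ)*(n:ℝ) - 1 := by nlinarith
    have hfinal : ENNReal.ofReal ((k:ℝ)*(n:ℝ) - 1) ≤ ENNReal.ofReal s := by
      rw [← hcast]
      exact hlow.trans hup
    have := (ENNReal.ofReal_le_ofReal_iff (by nlinarith [mul_nonneg hk0.le hr0])).1 hfinal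
    linarith
  · exact le_antisymm hple hge
end

section
/- For any collection S of closed line segments in ℝⁿ, each contained in a fixed bounded open set and of length at least a fixed δ > 0, there exists a collection S' ⊇ S of closed line segments such that the union of S' has the same Hausdorff dimension as the union of S, and the set of lines obtained by extending the segments of S' is a Borel subset of the space of lines. -/
open Set

/-- The nonvertical line `l(a,b) = {(t, t•a + b) : t ∈ ℝ}` in `ℝ × ℝ^{n-1} = ℝⁿ`. -/
def lineNV {m : ℕ} (a b : EuclideanSpace ℝ (Fin m)) : Set (ℝ × EuclideanSpace ℝ (Fin m)) :=
  {z | ∃ t : ℝ, z = (t, t • a + b)}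


open Metric Filter MeasureTheory MeasureTheory.Measure
open scoped ENNReal NNReal Topology

section Tube

/-- If `K` is compact and `W ⊆ α × β` is open, then the set of `b` such that
`{a | a ∈ K} × {b} ⊆ W` is open. -/
lemma isOpen_setOf_forall_mem_prod {α β : Type*} [TopologicalSpace α] [TopologicalSpace β]
    {K : Set α} (hK : IsCompact K) {W : Set (α × β)} (hW : IsOpen W) :
    IsOpen {b : β | ∀ a ∈ K, (a, b) ∈ W} := by
  rw [isOpen_iff_mem_nhds]
  intro b hb
  have hsub : K ×ˢ ({b} : Set β) ⊆ W := by
    rintro ⟨a, b'⟩ ⟨ha, hb'⟩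
    rcases hb' with rfl
    exact hb a ha
  rcases generalized_tube_lemma hK isCompact_singleton hW hsub with
    ⟨u, v, hu, hv, hKu, hbv, huv⟩
  refine mem_nhds_iff.2 ⟨v, fun b' hb' a ha => huv ⟨hKu ha, hb'⟩, hv, hbv rfl⟩

end Tube

section Gdelta

variable {X : Type*} [MetricSpace X] [MeasurableSpace X] [BorelSpace X]

lemma ennreal_rpow_add_le (a b : ℝ≥0∞) {d : ℝ} (hd : 0 < d) :
    (a + b) ^ d ≤ (2 : ℝ≥0∞) ^ d * (a ^ d + b ^ d) := by
  have h1 : a + b ≤ 2 * max a b := by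
    rw [two_mul]
    exact add_le_add (le_max_left _ _) (le_max_right _ _)
  calc (a + b) ^ d ≤ (2 * max a b) ^ d := ENNReal.rpow_le_rpow h1 hd.le
    _ = (2 : ℝ≥0∞) ^ d * (max a b) ^ d := ENNReal.mul_rpow_of_nonneg _ _ hd.le
    _ ≤ (2 : ℝ≥0∞) ^ d * (a ^ d + b ^ d) := by
        gcongr
        rcases max_cases a b with ⟨h, _⟩ | ⟨h, _⟩ <;> rw [h]
        · exact le_add_of_nonneg_right zero_le
        · exact le_add_of_nonneg_left zero_le

/-- Core covering lemma: a `μH[d]`-null set is contained in an open set admitting a countable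
cover by sets of diameter at most `r` with small `d`-dimensional cover sum. -/
lemma exists_open_cover_small (d : ℝ) (hd : 0 < d) (s : Set X) (hs : μH[d] s = 0)
    (r : ℝ≥0∞) (hr0 : 0 < r) (hrt : r ≠ ∞) (ε : ℝ≥0∞) (hε : 0 < ε) :
    ∃ (V : Set X) (t : ℕ → Set X), IsOpen V ∧ s ⊆ V ∧ V ⊆ ⋃ n, t n ∧
      (∀ n, EMetric.diam (t n) ≤ r) ∧ ∑' n, EMetric.diam (t n) ^ d ≤ ε := by
  set C : ℝ≥0∞ := (2 : ℝ≥0∞) ^ d with hC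
  have hC0 : C ≠ 0 := by
    simp only [hC]
    exact (ENNReal.rpow_pos (by norm_num) (by norm_num)).ne'
  have hCt : C ≠ ∞ := by
    simp only [hC]
    exact (ENNReal.rpow_lt_top_of_nonneg hd.le (by norm_num)).ne
  set ε2 : ℝ≥0∞ := ε / (2 * C) with hε2def
  have hε2 : 0 < ε2 := ENNReal.div_pos hε.ne' (by
    exact ENNReal.mul_ne_top (by norm_num) hCt)
  set ρ : ℝ≥0∞ := r / 2 with hρdef
  have hρ0 : 0 < ρ := ENNReal.div_pos hr0.ne' (by norm_num)
  have hρt : ρ ≠ ∞ := by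
    simp only [hρdef]
    exact (ENNReal.div_lt_top hrt (by norm_num)).ne
  have hρr : ρ + ρ ≤ r := by
    rw [hρdef, ENNReal.add_halves]
  -- get a cover of `s` at scale `ρ` with small sum
  have happ := hausdorffMeasure_apply d s
  rw [hs] at happ
  have hinf : (⨅ (t : ℕ → Set X) (_ : s ⊆ ⋃ n, t n) (_ : ∀ n, EMetric.diam (t n) ≤ ρ),
      ∑' n, ⨆ _ : (t n).Nonempty, EMetric.diam (t n) ^ d) < ε2 := by
    have hle := (iSup₂_le_iff.1 happ.symm.le) ρ hρ0
    exact lt_of_le_of_lt hle hε2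
  simp only [iInf_lt_iff] at hinf
  obtain ⟨t, hts, htd, htsum⟩ := hinf
  have htsum' : ∑' n, EMetric.diam (t n) ^ d ≤ ε2 := by
    refine le_trans (ENNReal.tsum_le_tsum fun n => ?_) htsum.le
    rcases (t n).eq_empty_or_nonempty with h | h
    · simp [h, EMetric.diam, EMetric.diam_empty, ENNReal.zero_rpow_of_pos hd, hd]
    · simp [h]
  -- choose thickening radii
  obtain ⟨c, hc0, hcsum⟩ := ENNReal.exists_pos_sum_of_countable' hε2.ne' ℕ
  set cn : ℕ → ℝ≥0∞ := fun n => min (c n) (ρ ^ d) with hcn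
  have hcn0 : ∀ n, 0 < cn n := fun n =>
    lt_min (hc0 n) (ENNReal.rpow_pos hρ0 hρt)
  set x : ℕ → ℝ≥0∞ := fun n => (cn n) ^ (1 / d) with hx
  have hxρ : ∀ n, x n ≤ ρ := by
    intro n
    have h1 : cn n ≤ ρ ^ d := min_le_right _ _
    calc x n ≤ (ρ ^ d) ^ (1 / d) := ENNReal.rpow_le_rpow h1 (by positivity)
      _ = ρ := by
          rw [← ENNReal.rpow_mul, mul_one_div, div_self hd.ne', ENNReal.rpow_one]
  have hxt : ∀ n, x n ≠ ∞ := fun n => ((hxρ n).trans_lt hρt.lt_top).ne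
  have hx0 : ∀ n, 0 < x n := fun n => ENNReal.rpow_pos (hcn0 n) (by
    exact ((min_le_right _ _).trans_lt
      (ENNReal.rpow_lt_top_of_nonneg hd.le hρt)).ne)
  have hxd : ∀ n, (x n) ^ d = cn n := by
    intro n
    rw [hx, ← ENNReal.rpow_mul, one_div, inv_mul_cancel₀ hd.ne', ENNReal.rpow_one]
  set δ : ℕ → ℝ≥0 := fun n => (x n / 2).toNNReal with hδ
  have hδ0 : ∀ n, (0 : ℝ) < δ n := by
    intro n
    have : (0 : ℝ≥0) < (x n / 2).toNNReal := by
      rw [ENNReal.toNNReal_pos_iff]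
      constructor
      · exact ENNReal.div_pos (hx0 n).ne' (by norm_num)
      · exact ENNReal.div_lt_top (hxt n) (by norm_num)
    exact_mod_cast this
  have hδx : ∀ n, 2 * ((δ n : ℝ≥0) : ℝ≥0∞) = x n := by
    intro n
    rw [hδ, ENNReal.coe_toNNReal (by
      exact (ENNReal.div_lt_top (hxt n) (by norm_num)).ne)]
    rw [ENNReal.mul_div_cancel' (by norm_num) (by norm_num)]
  -- the thickened cover
  set t' : ℕ → Set X := fun n => Metric.thickening (δ n) (t n) with ht'
  have hdiam' : ∀ n, EMetric.diam (t' n) ≤ EMetric.diam (t n) + x n := by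
    intro n
    have := Metric.ediam_thickening_le (s := t n) (δ n)
    rwa [hδx n] at this
  refine ⟨⋃ n, t' n, t', isOpen_iUnion fun n => Metric.isOpen_thickening, ?_,
    le_rfl, ?_, ?_⟩
  · exact hts.trans (iUnion_mono fun n => Metric.self_subset_thickening (hδ0 n) _)
  · intro n
    calc EMetric.diam (t' n) ≤ EMetric.diam (t n) + x n := hdiam' n
      _ ≤ ρ + ρ := add_le_add (htd n) (hxρ n)
      _ ≤ r := hρr
  · have key : ∀ n, EMetric.diam (t' n) ^ d ≤ C * (EMetric.diam (t n) ^ d + cn n) := by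
      intro n
      calc EMetric.diam (t' n) ^ d ≤ (EMetric.diam (t n) + x n) ^ d :=
            ENNReal.rpow_le_rpow (hdiam' n) hd.le
        _ ≤ C * (EMetric.diam (t n) ^ d + (x n) ^ d) := ennreal_rpow_add_le _ _ hd
        _ = C * (EMetric.diam (t n) ^ d + cn n) := by rw [hxd n]
    calc ∑' n, EMetric.diam (t' n) ^ d
        ≤ ∑' n, C * (EMetric.diam (t n) ^ d + cn n) := ENNReal.tsum_le_tsum key
      _ = C * ∑' n, (EMetric.diam (t n) ^ d + cn n) := ENNReal.tsum_mul_left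
      _ = C * ((∑' n, EMetric.diam (t n) ^ d) + ∑' n, cn n) := by rw [ENNReal.tsum_add]
      _ ≤ C * (ε2 + ε2) :=
          mul_le_mul_right (add_le_add htsum'
            (le_trans (ENNReal.tsum_le_tsum fun n => min_le_left _ _) hcsum.le)) C
      _ = 2 * C * ε2 := by ring
      _ = ε := by
          rw [hε2def, ENNReal.mul_div_cancel (a := 2 * C) (by
            exact mul_ne_zero (by norm_num) hC0) (ENNReal.mul_ne_top (by norm_num) hCt)]

/-- A `μH[d]`-null set is contained in a countable intersection of open sets which is still
`μH[d]`-null. -/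
lemma exists_gdelta_null (d : ℝ) (hd : 0 < d) (s : Set X) (hs : μH[d] s = 0) :
    ∃ V : ℕ → Set X, (∀ k, IsOpen (V k)) ∧ (∀ k, s ⊆ V k) ∧ μH[d] (⋂ k, V k) = 0 := by
  set r : ℕ → ℝ≥0∞ := fun k => ((k + 1 : ℕ) : ℝ≥0∞)⁻¹ with hrdef
  have hr0 : ∀ k, 0 < r k := by
    intro k
    rw [hrdef]
    simp only [ENNReal.inv_pos]
    exact ENNReal.natCast_ne_top _
  have hrt : ∀ k, r k ≠ ∞ := by
    intro k
    rw [hrdef]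
    simp
  have hrtendsto : Tendsto r atTop (𝓝 0) :=
    ENNReal.tendsto_inv_nat_nhds_zero.comp (tendsto_add_atTop_nat 1)
  choose V t hVo hsV hVt hdiam hsum using fun k =>
    exists_open_cover_small d hd s hs (r k) (hr0 k) (hrt k) (r k) (hr0 k)
  refine ⟨V, hVo, hsV, ?_⟩
  have hle : μH[d] (⋂ k, V k) ≤ liminf (fun k => ∑' i, EMetric.diam (t k i) ^ d) atTop := by
    refine hausdorffMeasure_le_liminf_tsum d _ r hrtendsto t ?_ ?_
    · exact Eventually.of_forall hdiam
    · exact Eventually.of_forall fun k => (iInter_subset V k).trans (hVt k)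
  have hlim : liminf (fun k => ∑' i, EMetric.diam (t k i) ^ d) atTop ≤
      liminf r atTop := liminf_le_liminf (Eventually.of_forall hsum)
  have : liminf r atTop = 0 := hrtendsto.liminf_eq
  exact le_antisymm (hle.trans (hlim.trans_eq this)) zero_le

/-- Every set is contained in a countable intersection of open sets of the same Hausdorff
dimension. -/
lemma exists_gdelta_dimH_eq (s : Set X) :
    ∃ U : ℕ → Set X, (∀ n, IsOpen (U n)) ∧ s ⊆ ⋂ n, U n ∧ dimH (⋂ n, U n) = dimH s := by
  rcases eq_or_ne (dimH s) ⊤ with htop | hfin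
  · refine ⟨fun _ => univ, fun _ => isOpen_univ, by simp, ?_⟩
    rw [iInter_const]
    exact le_antisymm (le_top.trans_eq htop.symm) (dimH_mono (subset_univ s))
  · set D : ℝ≥0 := (dimH s).toNNReal with hD
    have hDcoe : (D : ℝ≥0∞) = dimH s := ENNReal.coe_toNNReal hfin
    set a : ℕ → ℝ≥0 := fun j => D + ((j + 1 : ℕ) : ℝ≥0)⁻¹ with ha
    have hapos : ∀ j, 0 < ((j + 1 : ℕ) : ℝ≥0)⁻¹ := by
      intro j
      rw [inv_pos]
      exact_mod_cast Nat.succ_pos j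
    have hlt : ∀ j, dimH s < (a j : ℝ≥0∞) := by
      intro j
      rw [ha, ← hDcoe]
      push_cast
      exact ENNReal.lt_add_right ENNReal.coe_ne_top
        (by exact_mod_cast (hapos j).ne')
    have had : ∀ j, (0 : ℝ) < ((a j : ℝ≥0) : ℝ) := by
      intro j
      have : (0 : ℝ≥0) < a j := lt_of_lt_of_le (hapos j) (le_add_self)
      exact_mod_cast this
    have hμ : ∀ j, μH[((a j : ℝ≥0) : ℝ)] s = 0 := fun j =>
      hausdorffMeasure_of_dimH_lt (hlt j)
    choose V hVo hsV hV0 using fun j =>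
      exists_gdelta_null ((a j : ℝ≥0) : ℝ) (had j) s (hμ j)
    set U : ℕ → Set X := fun n => V n.unpair.1 n.unpair.2 with hU
    have hGsub : ∀ j, (⋂ n, U n) ⊆ ⋂ k, V j k := by
      intro j
      refine subset_iInter fun k => ?_
      have := iInter_subset U (Nat.pair j k)
      simpa [hU] using this
    refine ⟨U, fun n => hVo _ _, subset_iInter fun n => hsV _ _, ?_⟩
    refine le_antisymm ?_ (dimH_mono (subset_iInter fun n => hsV _ _))
    have hdim_le : ∀ j, dimH (⋂ n, U n) ≤ (a j : ℝ≥0∞) := by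
      intro j
      refine dimH_le_of_hausdorffMeasure_ne_top ?_
      have h0 : μH[((a j : ℝ≥0) : ℝ)] (⋂ n, U n) = 0 :=
        le_antisymm ((measure_mono (hGsub j)).trans_eq (hV0 j)) zero_le
      simp [h0]
    refine ENNReal.le_of_forall_pos_le_add fun ε hε _ => ?_
    obtain ⟨j, hj⟩ := exists_nat_ge (ε⁻¹ : ℝ≥0)
    have hjpos : (0 : ℝ≥0) < ((j + 1 : ℕ) : ℝ≥0) := by
      exact_mod_cast Nat.succ_pos j
    have hone : (1 : ℝ≥0) ≤ ((j + 1 : ℕ) : ℝ≥0) * ε := by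
      calc (1 : ℝ≥0) = ε⁻¹ * ε := (inv_mul_cancel₀ hε.ne').symm
        _ ≤ ((j + 1 : ℕ) : ℝ≥0) * ε := by
            gcongr
            calc (ε⁻¹ : ℝ≥0) ≤ (j : ℝ≥0) := hj
              _ ≤ ((j + 1 : ℕ) : ℝ≥0) := by
                  push_cast
                  exact le_add_of_nonneg_right zero_le_one
    have hjε : ((j + 1 : ℕ) : ℝ≥0)⁻¹ ≤ ε := by
      calc ((j + 1 : ℕ) : ℝ≥0)⁻¹ = ((j + 1 : ℕ) : ℝ≥0)⁻¹ * 1 := (mul_one _).symm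
        _ ≤ ((j + 1 : ℕ) : ℝ≥0)⁻¹ * (((j + 1 : ℕ) : ℝ≥0) * ε) := by gcongr
        _ = ε := by rw [← mul_assoc, inv_mul_cancel₀ hjpos.ne', one_mul]
    have haj : a j ≤ D + ε := add_le_add_right hjε D
    calc dimH (⋂ n, U n) ≤ (a j : ℝ≥0∞) := hdim_le j
      _ ≤ ((D + ε : ℝ≥0) : ℝ≥0∞) := by exact_mod_cast haj
      _ = dimH s + (ε : ℝ≥0∞) := by rw [ENNReal.coe_add, hDcoe]

end Gdelta

section Lines

variable {m : ℕ}

local notation "E" => EuclideanSpace ℝ (Fin m)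

lemma comb_eq (a b : E) (x1 x2 θ : ℝ) :
    (1 - θ) • ((x1, x1 • a + b) : ℝ × E) + θ • ((x2, x2 • a + b) : ℝ × E) =
      (((1 - θ) * x1 + θ * x2), ((1 - θ) * x1 + θ * x2) • a + b) := by
  refine Prod.ext ?_ ?_
  · simp [smul_eq_mul]
  · show (1 - θ) • (x1 • a + b) + θ • (x2 • a + b) = ((1 - θ) * x1 + θ * x2) • a + b
    module

lemma mem_segment_of_between (a b : E) {x1 x2 t : ℝ} (hx : x1 < x2)
    (ht1 : x1 ≤ t) (ht2 : t ≤ x2) :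
    ((t, t • a + b) : ℝ × E) ∈ segment ℝ ((x1, x1 • a + b) : ℝ × E) (x2, x2 • a + b) := by
  rw [segment_eq_image]
  refine ⟨(t - x1) / (x2 - x1), ⟨div_nonneg (by linarith) (by linarith), ?_⟩, ?_⟩
  · rw [div_le_one (by linarith)]
    linarith
  · dsimp only
    rw [comb_eq]
    have hne : x2 - x1 ≠ 0 := by linarith
    have : (1 - (t - x1) / (x2 - x1)) * x1 + (t - x1) / (x2 - x1) * x2 = t := by
      field_simp
      ring
    rw [this]

lemma range_lineMap_eq_lineNV (a b : E) {x1 x2 : ℝ} (h : x1 ≠ x2) :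
    Set.range (AffineMap.lineMap ((x1, x1 • a + b) : ℝ × E) ((x2, x2 • a + b) : ℝ × E) :
      ℝ →ᵃ[ℝ] ℝ × E) = lineNV a b := by
  ext z
  constructor
  · rintro ⟨s, rfl⟩
    exact ⟨(1 - s) * x1 + s * x2, by rw [AffineMap.lineMap_apply_module, comb_eq]⟩
  · rintro ⟨t, rfl⟩
    refine ⟨(t - x1) / (x2 - x1), ?_⟩
    rw [AffineMap.lineMap_apply_module, comb_eq]
    have hne : x2 - x1 ≠ 0 := sub_ne_zero.2 (Ne.symm h)
    have : (1 - (t - x1) / (x2 - x1)) * x1 + (t - x1) / (x2 - x1) * x2 = t := by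
      field_simp
      ring
    rw [this]

lemma endpoint_eq (a b : E) (P Q : ℝ × E)
    (h : Set.range (AffineMap.lineMap P Q : ℝ →ᵃ[ℝ] ℝ × E) = lineNV a b) :
    P = (P.1, P.1 • a + b) ∧ Q = (Q.1, Q.1 • a + b) := by
  have hP : P ∈ lineNV a b := by
    rw [← h]
    exact ⟨0, by simp⟩
  have hQ : Q ∈ lineNV a b := by
    rw [← h]
    exact ⟨1, by simp⟩
  obtain ⟨tP, htP⟩ := hP
  obtain ⟨tQ, htQ⟩ := hQ
  subst htP
  subst htQ
  simp

end Lines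

/-- For any collection `S` of closed nonvertical line segments in `ℝⁿ = ℝ × ℝ^{n-1}`,
each contained in a fixed bounded open set and of length at least `δ > 0`, there is a
larger collection `S' ⊇ S` of closed nonvertical line segments whose union has the same
Hausdorff dimension as that of `S`, and such that the set of parameters `(a,b)` of the
lines extending the segments of `S'` is Borel. -/
theorem exists_superfamily_with_borel_lines
    (m : ℕ) (hm : 1 ≤ m)
    (U : Set (ℝ × EuclideanSpace ℝ (Fin m))) (hUo : IsOpen U) (hUb : Bornology.IsBounded U)
    (δ : ℝ) (hδ : 0 < δ)
    (S : Set ((ℝ × EuclideanSpace ℝ (Fin m)) × (ℝ × EuclideanSpace ℝ (Fin m))))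
    (hSlen : ∀ p ∈ S, δ ≤ dist p.1 p.2)
    (hSU : ∀ p ∈ S, segment ℝ p.1 p.2 ⊆ U)
    (hSnv : ∀ p ∈ S, p.1.1 ≠ p.2.1) :
    ∃ S' : Set ((ℝ × EuclideanSpace ℝ (Fin m)) × (ℝ × EuclideanSpace ℝ (Fin m))),
      S ⊆ S' ∧ (∀ p ∈ S', p.1.1 ≠ p.2.1) ∧
      dimH (⋃ p ∈ S', segment ℝ p.1 p.2) = dimH (⋃ p ∈ S, segment ℝ p.1 p.2) ∧
      MeasurableSet {ab : EuclideanSpace ℝ (Fin m) × EuclideanSpace ℝ (Fin m) |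
        ∃ p ∈ S',
          Set.range (AffineMap.lineMap p.1 p.2 : ℝ →ᵃ[ℝ] ℝ × EuclideanSpace ℝ (Fin m)) =
            lineNV ab.1 ab.2} := by
  classical
  set E := ⋃ p ∈ S, segment ℝ p.1 p.2 with hE
  obtain ⟨Uo, hUoOpen, hEsub, hdim⟩ := exists_gdelta_dimH_eq E
  set G := ⋂ n, Uo n with hG
  set S' : Set ((ℝ × EuclideanSpace ℝ (Fin m)) × (ℝ × EuclideanSpace ℝ (Fin m))) :=
    {p | p.1.1 ≠ p.2.1 ∧ segment ℝ p.1 p.2 ⊆ G} with hS'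
  have hSS' : S ⊆ S' := by
    intro p hp
    refine ⟨hSnv p hp, ?_⟩
    refine Subset.trans ?_ hEsub
    rw [hE]
    exact subset_biUnion_of_mem (u := fun q => segment ℝ q.1 q.2) hp
  refine ⟨S', hSS', fun p hp => hp.1, ?_, ?_⟩
  · refine le_antisymm ?_ (dimH_mono (biUnion_subset_biUnion_left hSS'))
    calc dimH (⋃ p ∈ S', segment ℝ p.1 p.2) ≤ dimH G :=
          dimH_mono (iUnion₂_subset fun p hp => hp.2)
      _ = dimH E := hdim
  · have hM : {ab : EuclideanSpace ℝ (Fin m) × EuclideanSpace ℝ (Fin m) |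
        ∃ p ∈ S',
          Set.range (AffineMap.lineMap p.1 p.2 : ℝ →ᵃ[ℝ] ℝ × EuclideanSpace ℝ (Fin m)) =
            lineNV ab.1 ab.2} =
        ⋃ (q : ℚ × ℚ), {ab : EuclideanSpace ℝ (Fin m) × EuclideanSpace ℝ (Fin m) |
          ((q.1 : ℝ) < (q.2 : ℝ)) ∧ ∀ t ∈ Icc (q.1 : ℝ) (q.2 : ℝ),
            ((t, t • ab.1 + ab.2) : ℝ × EuclideanSpace ℝ (Fin m)) ∈ G} := by
      ext ⟨a, b⟩
      simp only [mem_setOf_eq, mem_iUnion]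
      constructor
      · rintro ⟨p, ⟨hne, hseg⟩, hline⟩
        obtain ⟨h1, h2⟩ := endpoint_eq a b p.1 p.2 hline
        rcases hne.lt_or_gt with hlt | hlt
        · obtain ⟨q1, hq1a, hq1b⟩ := exists_rat_btwn hlt
          obtain ⟨q2, hq2a, hq2b⟩ := exists_rat_btwn hq1b
          refine ⟨(q1, q2), hq2a, fun t ht => ?_⟩
          apply hseg
          rw [h1, h2]
          exact mem_segment_of_between a b hlt (hq1a.le.trans ht.1) (ht.2.trans hq2b.le)
        · obtain ⟨q1, hq1a, hq1b⟩ := exists_rat_btwn hlt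
          obtain ⟨q2, hq2a, hq2b⟩ := exists_rat_btwn hq1b
          refine ⟨(q1, q2), hq2a, fun t ht => ?_⟩
          apply hseg
          rw [segment_symm, h1, h2]
          exact mem_segment_of_between a b hlt (hq1a.le.trans ht.1) (ht.2.trans hq2b.le)
      · rintro ⟨⟨q1, q2⟩, hq, hG'⟩
        refine ⟨(((q1 : ℝ), (q1 : ℝ) • a + b), ((q2 : ℝ), (q2 : ℝ) • a + b)),
          ⟨ne_of_lt hq, ?_⟩, range_lineMap_eq_lineNV a b (ne_of_lt hq)⟩
        intro z hz
        rw [segment_eq_image] at hz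
        obtain ⟨θ, hθ, rfl⟩ := hz
        dsimp only
        rw [comb_eq]
        refine hG' _ ⟨?_, ?_⟩
        · nlinarith [hθ.1, hθ.2, hq]
        · nlinarith [hθ.1, hθ.2, hq]
    rw [hM]
    refine MeasurableSet.iUnion fun q => ?_
    by_cases hq : (q.1 : ℝ) < (q.2 : ℝ)
    · have heq : {ab : EuclideanSpace ℝ (Fin m) × EuclideanSpace ℝ (Fin m) |
          ((q.1 : ℝ) < (q.2 : ℝ)) ∧ ∀ t ∈ Icc (q.1 : ℝ) (q.2 : ℝ),
            ((t, t • ab.1 + ab.2) : ℝ × EuclideanSpace ℝ (Fin m)) ∈ G} =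
          ⋂ n, {ab : EuclideanSpace ℝ (Fin m) × EuclideanSpace ℝ (Fin m) |
            ∀ t ∈ Icc (q.1 : ℝ) (q.2 : ℝ),
              ((t, t • ab.1 + ab.2) : ℝ × EuclideanSpace ℝ (Fin m)) ∈ Uo n} := by
        ext ab
        simp only [mem_setOf_eq, mem_iInter, hG]
        exact ⟨fun h n t ht => h.2 t ht n, fun h => ⟨hq, fun t ht n => h n t ht⟩⟩
      rw [heq]
      refine MeasurableSet.iInter fun n => ?_
      have hcont : Continuous fun x : ℝ × (EuclideanSpace ℝ (Fin m) × EuclideanSpace ℝ (Fin m)) =>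
          ((x.1, x.1 • x.2.1 + x.2.2) : ℝ × EuclideanSpace ℝ (Fin m)) := by
        refine continuous_fst.prodMk ?_
        exact (continuous_fst.smul (continuous_fst.comp continuous_snd)).add
          (continuous_snd.comp continuous_snd)
      exact (isOpen_setOf_forall_mem_prod isCompact_Icc
        ((hUoOpen n).preimage hcont)).measurableSet
    · have heq : {ab : EuclideanSpace ℝ (Fin m) × EuclideanSpace ℝ (Fin m) |
          ((q.1 : ℝ) < (q.2 : ℝ)) ∧ ∀ t ∈ Icc (q.1 : ℝ) (q.2 : ℝ),
            ((t, t • ab.1 + ab.2) : ℝ × EuclideanSpace ℝ (Fin m)) ∈ G} = ∅ := by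
        ext ab
        simp [hq]
      rw [heq]
      exact MeasurableSet.empty
end

section
/- The Line Segment Extension Conjecture in ℝⁿ (if A is a union of line segments and B the union of the corresponding lines, then hdim A = hdim B) implies that every Besicovitch set in ℝⁿ has Hausdorff dimension at least n − 1. -/
open Set

noncomputable section
namespace BesAux

abbrev E (m : ℕ) := EuclideanSpace ℝ (Fin (m+1))

def pmap (m : ℕ) (v : E m) : E m :=
  (v 0)⁻¹ • (v + (1 - v 0) • EuclideanSpace.single 0 1)

def dirU (m : ℕ) (a : EuclideanSpace ℝ (Fin m)) : E m :=
  (WithLp.equiv 2 _).symm (Fin.cons 1 ((WithLp.equiv 2 _) a))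

def emb (m : ℕ) (a : EuclideanSpace ℝ (Fin m)) : E m :=
  (WithLp.equiv 2 _).symm (Fin.cons 0 ((WithLp.equiv 2 _) a))

variable {m : ℕ} {a : EuclideanSpace ℝ (Fin m)}

lemma emb_zero : emb m a 0 = 0 := rfl
lemma emb_succ (i : Fin m) : emb m a i.succ = a i := rfl
lemma dirU_zero : dirU m a 0 = 1 := rfl
lemma dirU_succ (i : Fin m) : dirU m a i.succ = a i := rfl

lemma isometry_emb (m : ℕ) : Isometry (emb (m := m)) := by
  refine Isometry.of_dist_eq fun a b => ?_
  rw [EuclideanSpace.dist_eq, EuclideanSpace.dist_eq]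
  congr 1
  rw [Fin.sum_univ_succ]
  simp [emb_zero, emb_succ]

lemma dirU_ne_zero : dirU m a ≠ 0 := by
  intro h
  have h0 : dirU m a 0 = (0 : E m) 0 := by rw [h]
  rw [show dirU m a 0 = 1 from rfl, show (0 : E m) 0 = 0 from rfl] at h0
  exact one_ne_zero h0

lemma norm_dirU_pos : 0 < ‖dirU m a‖ := norm_pos_iff.mpr dirU_ne_zero

def dirE (m : ℕ) (a : EuclideanSpace ℝ (Fin m)) : E m := ‖dirU m a‖⁻¹ • dirU m a

lemma dirE_zero : dirE m a 0 = ‖dirU m a‖⁻¹ := by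
  rw [show dirE m a 0 = ‖dirU m a‖⁻¹ * dirU m a 0 from rfl, dirU_zero, mul_one]

lemma dirE_zero_pos : 0 < dirE m a 0 := by
  rw [dirE_zero]; exact inv_pos.mpr norm_dirU_pos

lemma norm_dirE : ‖dirE m a‖ = 1 := by
  rw [dirE, norm_smul, norm_inv, norm_norm, inv_mul_cancel₀ (ne_of_gt norm_dirU_pos)]

lemma lineA : (dirE m a 0)⁻¹ • dirE m a - EuclideanSpace.single 0 1 = emb m a := by
  have h1 : (dirE m a 0)⁻¹ • dirE m a = dirU m a := by
    rw [dirE_zero, dirE, smul_smul, inv_inv, mul_inv_cancel₀ (ne_of_gt norm_dirU_pos), one_smul]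
  rw [h1]
  ext i
  simp only [PiLp.sub_apply, EuclideanSpace.single_apply]
  induction i using Fin.cases with
  | zero => rw [dirU_zero, emb_zero, if_pos rfl]; norm_num
  | succ j => rw [dirU_succ, emb_succ, if_neg (Fin.succ_ne_zero j)]; ring

def tlo (x0 c : ℝ) : ℝ := if 0 < x0 + c/2 then 3/4 else 0
def sgn (x0 c : ℝ) : ℝ := if 0 < x0 + c/2 then 1 else -1

lemma sgn_sq (x0 c : ℝ) : sgn x0 c * sgn x0 c = 1 := by
  unfold sgn; split_ifs <;> norm_num

lemma tlo_nonneg (x0 c : ℝ) : 0 ≤ tlo x0 c := by unfold tlo; split_ifs <;> norm_num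
lemma tlo_le (x0 c : ℝ) : tlo x0 c + 1/4 ≤ 1 := by unfold tlo; split_ifs <;> norm_num

lemma dlow (x0 c : ℝ) (hc : 0 < c) (t : ℝ)
    (ht : t ∈ Icc (tlo x0 c) (tlo x0 c + 1/4)) :
    c/4 ≤ sgn x0 c * (x0 + t * c) := by
  unfold tlo sgn at *
  obtain ⟨ht1, ht2⟩ := ht
  split_ifs at * with h
  · nlinarith
  · nlinarith

lemma pmap_line (m : ℕ) (x e : E m) (t : ℝ) (he : e 0 ≠ 0) (hd : x 0 + t * e 0 ≠ 0) :
    pmap m (x + t • e) =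
      ((e 0)⁻¹ • e - EuclideanSpace.single 0 1) +
        (x 0 + t * e 0)⁻¹ • (x - ((x 0) / (e 0)) • e + EuclideanSpace.single 0 1) := by
  ext i
  simp only [pmap, PiLp.add_apply, PiLp.sub_apply, PiLp.smul_apply, smul_eq_mul,
    EuclideanSpace.single_apply]
  rcases eq_or_ne i 0 with rfl | hi
  · simp only [if_pos rfl, ↓reduceIte]
    field_simp
    ring
  · simp only [if_neg hi]
    have hd' : x 0 + t * e 0 ≠ 0 := hd
    field_simp
    ring


lemma aux_inv (c u ε d₁ d₂ : ℝ) (hc : 0 < c) (hε : ε * ε = 1)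
    (h1 : c/4 ≤ ε * d₁) (h2 : c/4 ≤ ε * d₂) (hd : d₂ = d₁ + c/4)
    (hu0 : 0 ≤ u) (hu1 : u ≤ 1) :
    ((1-u)/d₁ + u/d₂ ≠ 0) ∧ d₁ ≤ ((1-u)/d₁ + u/d₂)⁻¹ ∧ ((1-u)/d₁ + u/d₂)⁻¹ ≤ d₂ := by
  have hc4 : 0 < c/4 := by linarith
  have hεd₁ : 0 < ε * d₁ := lt_of_lt_of_le hc4 h1
  have hεd₂ : 0 < ε * d₂ := lt_of_lt_of_le hc4 h2
  have hd₁ : d₁ ≠ 0 := by intro h; rw [h, mul_zero] at h1; linarith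
  have hd₂ : d₂ ≠ 0 := by intro h; rw [h, mul_zero] at h2; linarith
  have hεD : c/4 ≤ ε * ((1-u)*d₂ + u*d₁) := by
    nlinarith [mul_nonneg (by linarith : (0:ℝ) ≤ 1-u) (by linarith : (0:ℝ) ≤ ε*d₂ - c/4),
      mul_nonneg hu0 (by linarith : (0:ℝ) ≤ ε*d₁ - c/4)]
  have hDne : (1-u)*d₂ + u*d₁ ≠ 0 := by intro h; rw [h, mul_zero] at hεD; linarith
  have hDD : 0 < ((1-u)*d₂ + u*d₁) * ((1-u)*d₂ + u*d₁) := mul_self_pos.mpr hDne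
  have sq : ∀ a b : ℝ, c/4 ≤ ε * a → c/4 ≤ ε * b → 0 < a * b := by
    intro a b ha hb
    have h := mul_le_mul ha hb (le_of_lt hc4) (le_of_lt (lt_of_lt_of_le hc4 ha))
    have h2' : (ε*a)*(ε*b) = a*b := by
      calc (ε*a)*(ε*b) = (ε*ε)*(a*b) := by ring
        _ = a*b := by rw [hε]; ring
    nlinarith
  have hd₁D : 0 < d₁ * ((1-u)*d₂ + u*d₁) := sq _ _ h1 hεD
  have hd₂D : 0 < d₂ * ((1-u)*d₂ + u*d₁) := sq _ _ h2 hεD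
  have hd₁d₂ : 0 < d₁ * d₂ := sq _ _ h1 h2
  have hs : (1-u)/d₁ + u/d₂ = ((1-u)*d₂ + u*d₁)/(d₁*d₂) := by
    rw [div_add_div _ _ hd₁ hd₂]
    congr 1
    ring
  rw [hs, inv_div]
  have hfrac : ∀ a : ℝ, a / ((1-u)*d₂ + u*d₁) = a * ((1-u)*d₂ + u*d₁) / (((1-u)*d₂ + u*d₁) * ((1-u)*d₂ + u*d₁)) := by
    intro a
    rw [mul_div_mul_right _ _ hDne]
  refine ⟨by positivity, ?_, ?_⟩
  · have key : d₁*d₂/((1-u)*d₂ + u*d₁) - d₁ = (u*(c/4)*d₁)/((1-u)*d₂ + u*d₁) := by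
      rw [eq_div_iff hDne, sub_mul, div_mul_cancel₀ _ hDne, hd]
      ring
    have h0 : (0:ℝ) ≤ d₁*d₂/((1-u)*d₂ + u*d₁) - d₁ := by
      rw [key, hfrac]
      apply div_nonneg _ (le_of_lt hDD)
      calc (0:ℝ) ≤ u*(c/4)*(d₁*((1-u)*d₂ + u*d₁)) :=
            mul_nonneg (mul_nonneg hu0 (le_of_lt hc4)) (le_of_lt hd₁D)
        _ = u*(c/4)*d₁*((1-u)*d₂ + u*d₁) := by ring
    linarith
  · have key : d₂ - d₁*d₂/((1-u)*d₂ + u*d₁) = ((1-u)*(c/4)*d₂)/((1-u)*d₂ + u*d₁) := by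
      rw [eq_div_iff hDne, sub_mul, div_mul_cancel₀ _ hDne, hd]
      ring
    have h0 : (0:ℝ) ≤ d₂ - d₁*d₂/((1-u)*d₂ + u*d₁) := by
      rw [key, hfrac]
      apply div_nonneg _ (le_of_lt hDD)
      calc (0:ℝ) ≤ (1-u)*(c/4)*(d₂*((1-u)*d₂ + u*d₁)) :=
            mul_nonneg (mul_nonneg (by linarith) (le_of_lt hc4)) (le_of_lt hd₂D)
        _ = (1-u)*(c/4)*d₂*((1-u)*d₂ + u*d₁) := by ring
    linarith

lemma isLin (m : ℕ) : IsLinearMap ℝ (fun v : E m => v 0) := ⟨fun a b => rfl, fun c v => rfl⟩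

lemma contDiffOn_pmap (m : ℕ) (s : Set (E m)) (hs : ∀ v ∈ s, v 0 ≠ 0) :
    ContDiffOn ℝ 1 (pmap m) s := by
  have h0 : ContDiff ℝ 1 (fun v : E m => v 0) :=
    (EuclideanSpace.proj (0 : Fin (m+1)) : E m →L[ℝ] ℝ).contDiff
  have hinv : ContDiffOn ℝ 1 (fun v : E m => (v 0)⁻¹) s :=
    h0.contDiffOn.inv hs
  have h2 : ContDiff ℝ 1 (fun v : E m => v + (1 - v 0) • EuclideanSpace.single 0 (1:ℝ)) :=
    contDiff_id.add ((contDiff_const.sub h0).smul contDiff_const)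
  exact hinv.smul h2.contDiffOn

lemma dimH_pmap_image_le (m : ℕ) (A : Set (E m)) (hA : ∀ v ∈ A, v 0 ≠ 0) :
    dimH (pmap m '' A) ≤ dimH A := by
  have hsub : A ⊆ (A ∩ {v : E m | 0 < v 0}) ∪ (A ∩ {v : E m | v 0 < 0}) := by
    intro v hv
    rcases lt_or_gt_of_ne (hA v hv) with h | h
    · exact Or.inr ⟨hv, h⟩
    · exact Or.inl ⟨hv, h⟩
  have hpos : Convex ℝ {v : E m | 0 < v 0} := convex_halfSpace_gt (isLin m) 0
  have hneg : Convex ℝ {v : E m | v 0 < 0} := convex_halfSpace_lt (isLin m) 0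
  calc dimH (pmap m '' A)
      ≤ dimH (pmap m '' (A ∩ {v : E m | 0 < v 0}) ∪ pmap m '' (A ∩ {v : E m | v 0 < 0})) := by
        rw [← image_union]; exact dimH_mono (image_mono hsub)
    _ = max (dimH (pmap m '' (A ∩ {v : E m | 0 < v 0}))) (dimH (pmap m '' (A ∩ {v : E m | v 0 < 0}))) :=
        dimH_union _ _
    _ ≤ dimH A := by
        apply max_le
        · exact le_trans ((contDiffOn_pmap m _ (fun v hv => ne_of_gt hv)).dimH_image_le hpos
            inter_subset_right) (dimH_mono inter_subset_left)
        · exact le_trans ((contDiffOn_pmap m _ (fun v hv => ne_of_lt hv)).dimH_image_le hneg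
            inter_subset_right) (dimH_mono inter_subset_left)

lemma coef_eq (s₁ s₂ : ℝ) (h : s₁ - s₂ ≠ 0) :
    (1 - s₁/(s₁-s₂)) * s₁ + (s₁/(s₁-s₂)) * s₂ = 0 := by
  field_simp
  ring

lemma core (m : ℕ) (x : E m) (a : EuclideanSpace ℝ (Fin m)) (t₁ ε : ℝ)
    (ht₁0 : 0 ≤ t₁) (ht₁1 : t₁ + 1/4 ≤ 1) (hε : ε * ε = 1)
    (hlow : ∀ t ∈ Icc t₁ (t₁ + 1/4), dirE m a 0 / 4 ≤ ε * (x 0 + t * dirE m a 0)) :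
    (pmap m (x + t₁ • dirE m a)) 0 ≠ (pmap m (x + (t₁ + 1/4) • dirE m a)) 0 ∧
    segment ℝ (pmap m (x + t₁ • dirE m a)) (pmap m (x + (t₁ + 1/4) • dirE m a)) ⊆
      {w : E m | ∃ t ∈ Icc (0:ℝ) 1, (x + t • dirE m a) 0 ≠ 0 ∧ w = pmap m (x + t • dirE m a)} ∧
    emb m a ∈ range (AffineMap.lineMap (pmap m (x + t₁ • dirE m a))
      (pmap m (x + (t₁ + 1/4) • dirE m a)) : ℝ →ᵃ[ℝ] E m) := by
  have hc : 0 < dirE m a 0 := dirE_zero_pos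
  have hc4 : 0 < dirE m a 0 / 4 := by linarith
  have h1 : dirE m a 0 / 4 ≤ ε * (x 0 + t₁ * dirE m a 0) :=
    hlow t₁ ⟨le_refl _, by linarith⟩
  have h2 : dirE m a 0 / 4 ≤ ε * (x 0 + (t₁ + 1/4) * dirE m a 0) :=
    hlow _ ⟨by linarith, le_refl _⟩
  have hd₁ne : x 0 + t₁ * dirE m a 0 ≠ 0 := by
    intro h; rw [h, mul_zero] at h1; linarith
  have hd₂ne : x 0 + (t₁ + 1/4) * dirE m a 0 ≠ 0 := by
    intro h; rw [h, mul_zero] at h2; linarith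
  have hp : pmap m (x + t₁ • dirE m a) = emb m a + (x 0 + t₁ * dirE m a 0)⁻¹ •
      (x - (x 0 / dirE m a 0) • dirE m a + EuclideanSpace.single 0 1) := by
    rw [pmap_line m x (dirE m a) t₁ (ne_of_gt hc) hd₁ne, lineA]
  have hq : pmap m (x + (t₁ + 1/4) • dirE m a) = emb m a + (x 0 + (t₁ + 1/4) * dirE m a 0)⁻¹ •
      (x - (x 0 / dirE m a 0) • dirE m a + EuclideanSpace.single 0 1) := by
    rw [pmap_line m x (dirE m a) (t₁ + 1/4) (ne_of_gt hc) hd₂ne, lineA]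
  have hB0 : ((x - (x 0 / dirE m a 0) • dirE m a + EuclideanSpace.single 0 (1:ℝ) : E m)) 0 = 1 := by
    simp only [PiLp.add_apply, PiLp.sub_apply, PiLp.smul_apply, smul_eq_mul,
      EuclideanSpace.single_apply, if_pos rfl]
    rw [div_mul_cancel₀ _ (ne_of_gt hc)]
    norm_num
  have hp0 : (pmap m (x + t₁ • dirE m a)) 0 = (x 0 + t₁ * dirE m a 0)⁻¹ := by
    rw [hp]
    rw [show ((emb m a + (x 0 + t₁ * dirE m a 0)⁻¹ •
      (x - (x 0 / dirE m a 0) • dirE m a + EuclideanSpace.single 0 1) : E m)) 0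
      = emb m a 0 + (x 0 + t₁ * dirE m a 0)⁻¹ *
        (((x - (x 0 / dirE m a 0) • dirE m a + EuclideanSpace.single 0 1 : E m)) 0) from rfl]
    rw [emb_zero, hB0]
    ring
  have hq0 : (pmap m (x + (t₁ + 1/4) • dirE m a)) 0 = (x 0 + (t₁ + 1/4) * dirE m a 0)⁻¹ := by
    rw [hq]
    rw [show ((emb m a + (x 0 + (t₁ + 1/4) * dirE m a 0)⁻¹ •
      (x - (x 0 / dirE m a 0) • dirE m a + EuclideanSpace.single 0 1) : E m)) 0
      = emb m a 0 + (x 0 + (t₁ + 1/4) * dirE m a 0)⁻¹ *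
        (((x - (x 0 / dirE m a 0) • dirE m a + EuclideanSpace.single 0 1 : E m)) 0) from rfl]
    rw [emb_zero, hB0]
    ring
  have hdne : x 0 + t₁ * dirE m a 0 ≠ x 0 + (t₁ + 1/4) * dirE m a 0 := by
    intro h; nlinarith
  have hinvne : (x 0 + t₁ * dirE m a 0)⁻¹ ≠ (x 0 + (t₁ + 1/4) * dirE m a 0)⁻¹ :=
    fun h => hdne (inv_injective h)
  refine ⟨by rw [hp0, hq0]; exact hinvne, ?_, ?_⟩
  · intro z hz
    rw [segment_eq_image] at hz
    obtain ⟨u, hu, hzz⟩ := hz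
    obtain ⟨hsne, hslo, hshi⟩ := aux_inv (dirE m a 0) u ε (x 0 + t₁ * dirE m a 0)
      (x 0 + (t₁ + 1/4) * dirE m a 0) hc hε h1 h2 (by ring) hu.1 hu.2
    simp only [mem_setOf_eq]
    refine ⟨(((1-u)/(x 0 + t₁ * dirE m a 0) + u/(x 0 + (t₁ + 1/4) * dirE m a 0))⁻¹ - x 0)
        / dirE m a 0, ⟨?_, ?_⟩, ?_, ?_⟩
    · rw [le_div_iff₀ hc]
      nlinarith
    · rw [div_le_iff₀ hc]
      nlinarith
    · rw [show ((x + ((((1-u)/(x 0 + t₁ * dirE m a 0) + u/(x 0 + (t₁ + 1/4) * dirE m a 0))⁻¹ - x 0)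
          / dirE m a 0) • dirE m a : E m)) 0
        = x 0 + ((((1-u)/(x 0 + t₁ * dirE m a 0) + u/(x 0 + (t₁ + 1/4) * dirE m a 0))⁻¹ - x 0)
          / dirE m a 0) * dirE m a 0 from rfl]
      rw [div_mul_cancel₀ _ (ne_of_gt hc)]
      rw [show x 0 + ((((1-u)/(x 0 + t₁ * dirE m a 0) + u/(x 0 + (t₁ + 1/4) * dirE m a 0))⁻¹ - x 0))
        = (((1-u)/(x 0 + t₁ * dirE m a 0) + u/(x 0 + (t₁ + 1/4) * dirE m a 0))⁻¹) by ring]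
      exact inv_ne_zero hsne
    · have hdt : x 0 + ((((1-u)/(x 0 + t₁ * dirE m a 0) + u/(x 0 + (t₁ + 1/4) * dirE m a 0))⁻¹ - x 0)
          / dirE m a 0) * dirE m a 0
        = ((1-u)/(x 0 + t₁ * dirE m a 0) + u/(x 0 + (t₁ + 1/4) * dirE m a 0))⁻¹ := by
        rw [div_mul_cancel₀ _ (ne_of_gt hc)]; ring
      rw [pmap_line m x (dirE m a) _ (ne_of_gt hc) (by rw [hdt]; exact inv_ne_zero hsne), lineA,
        hdt, inv_inv, ← hzz, hp, hq]
      rw [show (1-u)/(x 0 + t₁ * dirE m a 0) + u/(x 0 + (t₁ + 1/4) * dirE m a 0)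
        = (1-u) * (x 0 + t₁ * dirE m a 0)⁻¹ + u * (x 0 + (t₁ + 1/4) * dirE m a 0)⁻¹ by
          rw [div_eq_mul_inv, div_eq_mul_inv]]
      module
  · refine ⟨(x 0 + t₁ * dirE m a 0)⁻¹ /
        ((x 0 + t₁ * dirE m a 0)⁻¹ - (x 0 + (t₁ + 1/4) * dirE m a 0)⁻¹), ?_⟩
    have hne : (x 0 + t₁ * dirE m a 0)⁻¹ - (x 0 + (t₁ + 1/4) * dirE m a 0)⁻¹ ≠ 0 :=
      sub_ne_zero.mpr hinvne
    have hcoef : (1 - (x 0 + t₁ * dirE m a 0)⁻¹ /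
          ((x 0 + t₁ * dirE m a 0)⁻¹ - (x 0 + (t₁ + 1/4) * dirE m a 0)⁻¹)) * (x 0 + t₁ * dirE m a 0)⁻¹
        + ((x 0 + t₁ * dirE m a 0)⁻¹ /
          ((x 0 + t₁ * dirE m a 0)⁻¹ - (x 0 + (t₁ + 1/4) * dirE m a 0)⁻¹)) * (x 0 + (t₁ + 1/4) * dirE m a 0)⁻¹
        = 0 :=
      coef_eq _ _ hne
    rw [AffineMap.lineMap_apply_module, hp, hq]
    calc (1 - (x 0 + t₁ * dirE m a 0)⁻¹ /
          ((x 0 + t₁ * dirE m a 0)⁻¹ - (x 0 + (t₁ + 1/4) * dirE m a 0)⁻¹)) •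
            (emb m a + (x 0 + t₁ * dirE m a 0)⁻¹ •
              (x - (x 0 / dirE m a 0) • dirE m a + EuclideanSpace.single 0 1))
        + ((x 0 + t₁ * dirE m a 0)⁻¹ /
          ((x 0 + t₁ * dirE m a 0)⁻¹ - (x 0 + (t₁ + 1/4) * dirE m a 0)⁻¹)) •
            (emb m a + (x 0 + (t₁ + 1/4) * dirE m a 0)⁻¹ •
              (x - (x 0 / dirE m a 0) • dirE m a + EuclideanSpace.single 0 1))
        = emb m a + ((1 - (x 0 + t₁ * dirE m a 0)⁻¹ /
          ((x 0 + t₁ * dirE m a 0)⁻¹ - (x 0 + (t₁ + 1/4) * dirE m a 0)⁻¹)) * (x 0 + t₁ * dirE m a 0)⁻¹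
        + ((x 0 + t₁ * dirE m a 0)⁻¹ /
          ((x 0 + t₁ * dirE m a 0)⁻¹ - (x 0 + (t₁ + 1/4) * dirE m a 0)⁻¹)) * (x 0 + (t₁ + 1/4) * dirE m a 0)⁻¹) •
            (x - (x 0 / dirE m a 0) • dirE m a + EuclideanSpace.single 0 1) := by module
      _ = emb m a := by rw [hcoef, zero_smul, add_zero]

end BesAux

open BesAux in
/-- The Line Segment Extension Conjecture in ℝⁿ (unions of line segments and of their
full line extensions have the same Hausdorff dimension) implies that every Besicovitch
set in ℝⁿ (compact set containing a unit segment in every direction) has Hausdorff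
dimension at least `n - 1`. -/
theorem besicovitch_dimH_ge_of_LSEC
    (n : ℕ) (hn : 2 ≤ n)
    (LSEC : ∀ S : Set (EuclideanSpace ℝ (Fin n) × EuclideanSpace ℝ (Fin n)),
      (∀ p ∈ S, p.1 ≠ p.2) →
      dimH (⋃ p ∈ S, segment ℝ p.1 p.2) =
        dimH (⋃ p ∈ S,
          Set.range (AffineMap.lineMap p.1 p.2 : ℝ →ᵃ[ℝ] EuclideanSpace ℝ (Fin n))))
    (K : Set (EuclideanSpace ℝ (Fin n))) (hK : IsCompact K)
    (hBes : ∀ e : EuclideanSpace ℝ (Fin n), ‖e‖ = 1 →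
      ∃ x, ∀ t ∈ Icc (0 : ℝ) 1, x + t • e ∈ K) :
    (n : ENNReal) - 1 ≤ dimH K := by
  obtain ⟨m, rfl⟩ : ∃ m, n = m + 1 := ⟨n - 1, by omega⟩
  clear hn hK
  classical
  choose xv hxv using fun a : EuclideanSpace ℝ (Fin m) =>
    hBes (dirE m a) norm_dirE
  have hcore := fun a : EuclideanSpace ℝ (Fin m) =>
    core m (xv a) a (tlo (xv a 0) (dirE m a 0)) (sgn (xv a 0) (dirE m a 0))
      (tlo_nonneg _ _) (tlo_le _ _) (sgn_sq _ _)
      (fun t ht => dlow _ _ dirE_zero_pos t ht)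
  set S : Set (E m × E m) :=
    range (fun a : EuclideanSpace ℝ (Fin m) =>
      (pmap m (xv a + tlo (xv a 0) (dirE m a 0) • dirE m a),
       pmap m (xv a + (tlo (xv a 0) (dirE m a 0) + 1/4) • dirE m a))) with hS
  have hSne : ∀ p ∈ S, p.1 ≠ p.2 := by
    rintro p ⟨a, rfl⟩ h
    exact (hcore a).1 (congrArg (fun v : E m => v 0) h)
  have upper : (⋃ p ∈ S, segment ℝ p.1 p.2) ⊆
      pmap m '' (K ∩ {v : E m | v 0 ≠ 0}) := by
    intro z hz
    rw [mem_iUnion₂] at hz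
    obtain ⟨p, hpS, hzp⟩ := hz
    obtain ⟨a, rfl⟩ := hpS
    obtain ⟨t, ht, hne0, rfl⟩ := (hcore a).2.1 hzp
    exact ⟨_, ⟨hxv a t ht, hne0⟩, rfl⟩
  have lower : emb m '' univ ⊆
      ⋃ p ∈ S, range (AffineMap.lineMap p.1 p.2 : ℝ →ᵃ[ℝ] E m) := by
    rintro w ⟨a, -, rfl⟩
    rw [mem_iUnion₂]
    exact ⟨_, ⟨a, rfl⟩, (hcore a).2.2⟩
  have hm : ((m + 1 : ℕ) : ENNReal) - 1 = (m : ENNReal) := by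
    push_cast
    rw [ENNReal.add_sub_cancel_right ENNReal.one_ne_top]
  rw [hm]
  calc (m : ENNReal) = dimH (univ : Set (EuclideanSpace ℝ (Fin m))) := by
        rw [Real.dimH_univ_eq_finrank, finrank_euclideanSpace_fin]
    _ = dimH (emb m '' univ) := ((isometry_emb m).dimH_image univ).symm
    _ ≤ dimH (⋃ p ∈ S, range (AffineMap.lineMap p.1 p.2 : ℝ →ᵃ[ℝ] E m)) := dimH_mono lower
    _ = dimH (⋃ p ∈ S, segment ℝ p.1 p.2) := (LSEC S hSne).symm
    _ ≤ dimH (pmap m '' (K ∩ {v : E m | v 0 ≠ 0})) := dimH_mono upper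
    _ ≤ dimH (K ∩ {v : E m | v 0 ≠ 0}) := dimH_pmap_image_le m _ (fun v hv => hv.2)
    _ ≤ dimH K := dimH_mono inter_subset_left
end
end

section
/- There exists a countable family of line segments in ℝ³ whose union A has Hausdorff dimension 1, and a family of rectifiable curves, each a countable concatenation of these segments, such that adding to each curve its single limit point yields a set containing [0,1] × [0,1] × {0}, which has Hausdorff dimension 2. Hence extending rectifiable curves by their endpoint limit points can raise Hausdorff dimension from 1 to at least 2. -/
open Set Filter

noncomputable section

namespace CurvesAux

/-- clamp to `[0,1]` -/
def pj (x : ℝ) : ℝ := max 0 (min x 1)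

lemma pj_nonneg (x : ℝ) : 0 ≤ pj x := le_max_left _ _

lemma pj_le_one (x : ℝ) : pj x ≤ 1 := max_le zero_le_one (min_le_right _ _)

lemma pj_eq {x : ℝ} (h0 : 0 ≤ x) (h1 : x ≤ 1) : pj x = x := by
  unfold pj; rw [min_eq_left h1, max_eq_right h0]

/-- dyadic approximation -/
def c (n : ℕ) (x : ℝ) : ℝ := (⌊(2:ℝ)^n * pj x⌋₊ : ℝ) / 2^n

lemma c_le (n : ℕ) (x : ℝ) : c n x ≤ pj x := by
  have h2 : (0:ℝ) < 2^n := by positivity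
  rw [c, div_le_iff₀ h2]
  have := Nat.floor_le (mul_nonneg h2.le (pj_nonneg x))
  nlinarith

lemma le_c (n : ℕ) (x : ℝ) : pj x ≤ c n x + (2:ℝ)⁻¹ ^ n := by
  have h2 : (0:ℝ) < 2^n := by positivity
  have h := Nat.lt_floor_add_one ((2:ℝ)^n * pj x)
  calc pj x ≤ ((⌊(2:ℝ)^n * pj x⌋₊ : ℝ) + 1) / 2^n := by
        rw [le_div_iff₀ h2]; nlinarith
    _ = c n x + (2:ℝ)⁻¹ ^ n := by rw [c, add_div, inv_pow, one_div]

lemma c_dist (n : ℕ) (x : ℝ) : |c n x - pj x| ≤ (2:ℝ)⁻¹ ^ n := by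
  have h1 := c_le n x
  have h2 := le_c n x
  have h3 : (0:ℝ) ≤ (2:ℝ)⁻¹ ^ n := by positivity
  rw [abs_le]; constructor <;> linarith

/-- nodes of the quadtree -/
def P (n : ℕ) (i : ℝ × ℝ) : ℝ × ℝ × ℝ := (c n i.1, c n i.2, (2:ℝ)⁻¹ ^ n)

def v (n : ℕ) (i : ℝ × ℝ) : ℝ × ℝ × ℝ := P (n+1) i - P n i

lemma pow_half_succ_le (n : ℕ) : (2:ℝ)⁻¹ ^ (n+1) ≤ (2:ℝ)⁻¹ ^ n :=
  pow_le_pow_of_le_one (by norm_num) (by norm_num) (Nat.le_succ n)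

lemma c_succ_dist (n : ℕ) (x : ℝ) : |c (n+1) x - c n x| ≤ 2 * (2:ℝ)⁻¹ ^ n := by
  have h1 := c_dist (n+1) x
  have h2 := c_dist n x
  have h3 := pow_half_succ_le n
  calc |c (n+1) x - c n x| ≤ |c (n+1) x - pj x| + |pj x - c n x| :=
        abs_sub_le (c (n+1) x) (pj x) (c n x)
    _ ≤ 2 * (2:ℝ)⁻¹ ^ n := by rw [abs_sub_comm (pj x)]; linarith

lemma norm_v_le (n : ℕ) (i : ℝ × ℝ) : ‖v n i‖ ≤ 2 * (2:ℝ)⁻¹ ^ n := by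
  have hx := c_succ_dist n i.1
  have hy := c_succ_dist n i.2
  have h3 : |(2:ℝ)⁻¹ ^ (n+1) - (2:ℝ)⁻¹ ^ n| ≤ 2 * (2:ℝ)⁻¹ ^ n := by
    have h := pow_half_succ_le n
    have h0 : (0:ℝ) ≤ (2:ℝ)⁻¹ ^ (n+1) := by positivity
    rw [abs_le]; constructor <;> linarith
  have hv : v n i = (c (n+1) i.1 - c n i.1, c (n+1) i.2 - c n i.2,
      (2:ℝ)⁻¹ ^ (n+1) - (2:ℝ)⁻¹ ^ n) := rfl
  rw [hv, Prod.norm_def, Prod.norm_def]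
  simp only [Real.norm_eq_abs]
  exact max_le hx (max_le hy h3)

/-- breakpoint functions -/
def φ (n : ℕ) (t : ℝ) : ℝ :=
  min 1 (max 0 (((n:ℝ)+1) * ((n:ℝ)+2) * (t - (n:ℝ)/((n:ℝ)+1))))

lemma φ_nonneg (n : ℕ) (t : ℝ) : 0 ≤ φ n t :=
  le_min zero_le_one (le_max_left _ _)

lemma φ_le_one (n : ℕ) (t : ℝ) : φ n t ≤ 1 := min_le_left _ _

lemma φ_lip (n : ℕ) (a b : ℝ) :
    |φ n a - φ n b| ≤ ((n:ℝ)+1) * ((n:ℝ)+2) * |a - b| := by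
  have hm : (0:ℝ) ≤ ((n:ℝ)+1) * ((n:ℝ)+2) := by positivity
  have base : LipschitzWith (((n:ℝ)+1) * ((n:ℝ)+2)).toNNReal
      (fun t : ℝ => ((n:ℝ)+1) * ((n:ℝ)+2) * (t - (n:ℝ)/((n:ℝ)+1))) := by
    apply LipschitzWith.of_dist_le_mul
    intro x y
    rw [Real.dist_eq, Real.dist_eq, Real.coe_toNNReal _ hm]
    rw [show ((n:ℝ)+1) * ((n:ℝ)+2) * (x - (n:ℝ)/((n:ℝ)+1)) -
        ((n:ℝ)+1) * ((n:ℝ)+2) * (y - (n:ℝ)/((n:ℝ)+1)) =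
        ((n:ℝ)+1) * ((n:ℝ)+2) * (x - y) by ring]
    rw [abs_mul, abs_of_nonneg hm]
  have lip : LipschitzWith (((n:ℝ)+1) * ((n:ℝ)+2)).toNNReal (φ n) :=
    (base.const_max 0).const_min 1
  have := lip.dist_le_mul a b
  rwa [Real.dist_eq, Real.dist_eq, Real.coe_toNNReal _ hm] at this

lemma frac_mono {a b : ℕ} (h : a ≤ b) : (a:ℝ)/((a:ℝ)+1) ≤ (b:ℝ)/((b:ℝ)+1) := by
  have hc : (a:ℝ) ≤ (b:ℝ) := Nat.cast_le.2 h
  rw [div_le_div_iff₀ (by positivity) (by positivity)]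
  nlinarith

lemma φ_of_le {n : ℕ} {t : ℝ} (h : t ≤ (n:ℝ)/((n:ℝ)+1)) : φ n t = 0 := by
  have hX : ((n:ℝ)+1) * ((n:ℝ)+2) * (t - (n:ℝ)/((n:ℝ)+1)) ≤ 0 :=
    mul_nonpos_of_nonneg_of_nonpos (by positivity) (by linarith)
  rw [φ, max_eq_left hX, min_eq_right zero_le_one]

lemma φ_of_ge {n : ℕ} {t : ℝ} (h : ((n:ℝ)+1)/((n:ℝ)+2) ≤ t) : φ n t = 1 := by
  have hd : (0:ℝ) < (n:ℝ)+2 := by positivity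
  rw [div_le_iff₀ hd] at h
  have hkey : ((n:ℝ)+1) * ((n:ℝ)+2) * (t - (n:ℝ)/((n:ℝ)+1)) =
      ((n:ℝ)+2) * (((n:ℝ)+1) * t - (n:ℝ)) := by
    have : ((n:ℝ)+1) ≠ 0 := by positivity
    field_simp
  have hX : 1 ≤ ((n:ℝ)+1) * ((n:ℝ)+2) * (t - (n:ℝ)/((n:ℝ)+1)) := by
    rw [hkey]; nlinarith
  rw [φ, max_eq_right (by linarith), min_eq_left hX]

/-- segment data -/
def F (q : ℕ × ℕ × ℕ × ℕ × ℕ) : (ℝ × ℝ × ℝ) × (ℝ × ℝ × ℝ) :=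
  (((q.2.1 : ℝ) / 2 ^ q.1, (q.2.2.1 : ℝ) / 2 ^ q.1, (2:ℝ)⁻¹ ^ q.1),
   ((q.2.2.2.1 : ℝ) / 2 ^ (q.1 + 1), (q.2.2.2.2 : ℝ) / 2 ^ (q.1 + 1), (2:ℝ)⁻¹ ^ (q.1 + 1)))

def seg (k : ℕ) : (ℝ × ℝ × ℝ) × (ℝ × ℝ × ℝ) :=
  F ((Denumerable.eqv (ℕ × ℕ × ℕ × ℕ × ℕ)).symm k)

lemma seg_eqv (q : ℕ × ℕ × ℕ × ℕ × ℕ) : seg ((Denumerable.eqv (ℕ × ℕ × ℕ × ℕ × ℕ)) q) = F q := by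
  rw [seg, Equiv.symm_apply_apply]

/-- the curves -/
def γf (i : ℝ × ℝ) (t : ℝ) : ℝ × ℝ × ℝ := P 0 i + ∑' n, φ n t • v n i

lemma summable_geom2 : Summable fun n : ℕ => 2 * (2:ℝ)⁻¹ ^ n :=
  (summable_geometric_of_lt_one (by norm_num) (by norm_num)).mul_left 2

lemma sumγ (i : ℝ × ℝ) (t : ℝ) : Summable fun n => φ n t • v n i := by
  apply Summable.of_norm_bounded summable_geom2
  intro n
  rw [norm_smul, Real.norm_eq_abs, abs_of_nonneg (φ_nonneg n t)]
  calc φ n t * ‖v n i‖ ≤ 1 * (2 * (2:ℝ)⁻¹ ^ n) :=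
        mul_le_mul (φ_le_one n t) (norm_v_le n i) (norm_nonneg _) zero_le_one
    _ = 2 * (2:ℝ)⁻¹ ^ n := one_mul _

/-- weight sequence for the Lipschitz bound -/
def w (n : ℕ) : ℝ := ((n:ℝ)+1) * ((n:ℝ)+2) * (2 * (2:ℝ)⁻¹ ^ n)

lemma w_nonneg (n : ℕ) : 0 ≤ w n := by rw [w]; positivity

lemma summable_w : Summable w := by
  have h : ‖(2:ℝ)⁻¹‖ < 1 := by
    rw [Real.norm_eq_abs, abs_of_nonneg (by norm_num : (0:ℝ) ≤ 2⁻¹)]; norm_num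
  have s2 := summable_pow_mul_geometric_of_norm_lt_one (R := ℝ) 2 h
  have s1 := summable_pow_mul_geometric_of_norm_lt_one (R := ℝ) 1 h
  have s0 := summable_pow_mul_geometric_of_norm_lt_one (R := ℝ) 0 h
  refine (((s2.mul_left 2).add (s1.mul_left 6)).add (s0.mul_left 4)).congr fun n => ?_
  rw [w]; push_cast; ring

lemma γ_dist (i : ℝ × ℝ) (a b : ℝ) :
    dist (γf i a) (γf i b) ≤ (∑' n, w n) * dist a b := by
  have hsa := sumγ i a
  have hsb := sumγ i b
  have hterm : ∀ n, ‖φ n a • v n i - φ n b • v n i‖ ≤ w n * dist a b := by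
    intro n
    rw [← sub_smul, norm_smul, Real.norm_eq_abs]
    calc |φ n a - φ n b| * ‖v n i‖
        ≤ (((n:ℝ)+1) * ((n:ℝ)+2) * |a - b|) * (2 * (2:ℝ)⁻¹ ^ n) :=
          mul_le_mul (φ_lip n a b) (norm_v_le n i) (norm_nonneg _) (by positivity)
      _ = w n * dist a b := by rw [Real.dist_eq, w]; ring
  have hsum : Summable fun n => w n * dist a b := summable_w.mul_right _
  have hnorm : Summable fun n => ‖φ n a • v n i - φ n b • v n i‖ :=
    Summable.of_nonneg_of_le (fun n => norm_nonneg _) hterm hsum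
  rw [dist_eq_norm]
  have he : γf i a - γf i b = ∑' n, (φ n a • v n i - φ n b • v n i) := by
    rw [γf, γf, add_sub_add_left_eq_sub, ← Summable.tsum_sub hsa hsb]
  rw [he]
  calc ‖∑' n, (φ n a • v n i - φ n b • v n i)‖
      ≤ ∑' n, ‖φ n a • v n i - φ n b • v n i‖ := norm_tsum_le_tsum_norm hnorm
    _ ≤ ∑' n, w n * dist a b := Summable.tsum_le_tsum hterm hnorm hsum
    _ = (∑' n, w n) * dist a b := tsum_mul_right

lemma γ_lipschitz (i : ℝ × ℝ) : LipschitzWith (∑' n, w n).toNNReal (γf i) := by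
  apply LipschitzWith.of_dist_le_mul
  intro a b
  rw [Real.coe_toNNReal _ (tsum_nonneg w_nonneg)]
  exact γ_dist i a b

lemma γ_piece (i : ℝ × ℝ) {t : ℝ} (ht0 : 0 ≤ t) (ht1 : t < 1) :
    γf i t = P (⌊t/(1-t)⌋₊) i + φ (⌊t/(1-t)⌋₊) t • v (⌊t/(1-t)⌋₊) i := by
  set N := ⌊t/(1-t)⌋₊ with hN
  have htp : (0:ℝ) < 1 - t := by linarith
  have hf1 : (N:ℝ) ≤ t/(1-t) := Nat.floor_le (div_nonneg ht0 htp.le)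
  have hf2 : t/(1-t) < (N:ℝ) + 1 := Nat.lt_floor_add_one _
  rw [le_div_iff₀ htp] at hf1
  rw [div_lt_iff₀ htp] at hf2
  have hlow : (N:ℝ)/((N:ℝ)+1) ≤ t := by
    rw [div_le_iff₀ (by positivity)]; nlinarith
  have hhigh : t < ((N:ℝ)+1)/((N:ℝ)+2) := by
    rw [lt_div_iff₀ (by positivity)]; nlinarith
  have hzero : ∀ n ∉ Finset.range (N+1), φ n t • v n i = 0 := by
    intro n hn
    have hn' : N + 1 ≤ n := by simpa [Finset.mem_range, Nat.lt_succ_iff] using hn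
    have hmono := frac_mono hn'
    push_cast at hmono
    have : t ≤ (n:ℝ)/((n:ℝ)+1) := le_trans hhigh.le (by rw [show (N:ℝ)+2 = N+1+1 by ring]; exact hmono)
    rw [φ_of_le this, zero_smul]
  have hsum : ∑' n, φ n t • v n i = ∑ n ∈ Finset.range (N+1), φ n t • v n i :=
    tsum_eq_sum hzero
  have hone : ∀ n ∈ Finset.range N, φ n t • v n i = v n i := by
    intro n hn
    rw [Finset.mem_range] at hn
    have hmono := frac_mono (Nat.succ_le_of_lt hn)
    push_cast at hmono
    have : ((n:ℝ)+1)/((n:ℝ)+2) ≤ t :=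
      le_trans (by rw [show (n:ℝ)+2 = n+1+1 by ring]; exact hmono) hlow
    rw [φ_of_ge this, one_smul]
  have htel : ∑ n ∈ Finset.range N, v n i = P N i - P 0 i := by
    exact Finset.sum_range_sub (fun n => P n i) N
  rw [γf, hsum, Finset.sum_range_succ, Finset.sum_congr rfl hone, htel]
  abel

lemma γ_mem_segment (i : ℝ × ℝ) {t : ℝ} (ht0 : 0 ≤ t) (ht1 : t < 1) :
    γf i t ∈ segment ℝ (P (⌊t/(1-t)⌋₊) i) (P (⌊t/(1-t)⌋₊ + 1) i) := by
  set N := ⌊t/(1-t)⌋₊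
  refine ⟨1 - φ N t, φ N t, by linarith [φ_le_one N t], φ_nonneg N t, by ring, ?_⟩
  rw [γ_piece i ht0 ht1, v, sub_smul, one_smul, smul_sub]
  abel

lemma P_eq_F_fst (n : ℕ) (i : ℝ × ℝ) (a' b' : ℕ) :
    P n i = (F (n, ⌊(2:ℝ)^n * pj i.1⌋₊, ⌊(2:ℝ)^n * pj i.2⌋₊, a', b')).1 := rfl

lemma P_eq_F_snd (n : ℕ) (i : ℝ × ℝ) (a b : ℕ) :
    P (n+1) i = (F (n, a, b, ⌊(2:ℝ)^(n+1) * pj i.1⌋₊, ⌊(2:ℝ)^(n+1) * pj i.2⌋₊)).2 := rfl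

lemma summable_v (i : ℝ × ℝ) : Summable fun n => v n i :=
  Summable.of_norm_bounded summable_geom2 (fun n => norm_v_le n i)

lemma tendsto_pow_half : Tendsto (fun n : ℕ => (2:ℝ)⁻¹ ^ n) atTop (nhds 0) :=
  tendsto_pow_atTop_nhds_zero_of_lt_one (by norm_num) (by norm_num)

lemma tendsto_c (x : ℝ) : Tendsto (fun n => c n x) atTop (nhds (pj x)) := by
  rw [tendsto_iff_dist_tendsto_zero]
  apply squeeze_zero (fun n => dist_nonneg)
    (fun n => ?_) tendsto_pow_half
  rw [Real.dist_eq]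
  exact c_dist n x

lemma tendsto_P (i : ℝ × ℝ) :
    Tendsto (fun n => P n i) atTop (nhds (pj i.1, pj i.2, 0)) :=
  (tendsto_c i.1).prodMk_nhds ((tendsto_c i.2).prodMk_nhds tendsto_pow_half)

lemma tsum_v (i : ℝ × ℝ) : ∑' n, v n i = (pj i.1, pj i.2, 0) - P 0 i := by
  have h1 := (summable_v i).hasSum.tendsto_sum_nat
  have h2 : Tendsto (fun N => ∑ n ∈ Finset.range N, v n i) atTop
      (nhds ((pj i.1, pj i.2, 0) - P 0 i)) := by
    have he : (fun N => ∑ n ∈ Finset.range N, v n i) = fun N => P N i - P 0 i :=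
      funext fun N => Finset.sum_range_sub (fun n => P n i) N
    rw [he]
    exact (tendsto_P i).sub_const _
  exact tendsto_nhds_unique h1 h2

lemma φ_one (n : ℕ) : φ n 1 = 1 := by
  apply φ_of_ge
  rw [div_le_one (by positivity)]
  linarith

lemma γ_one (i : ℝ × ℝ) : γf i 1 = (pj i.1, pj i.2, 0) := by
  rw [γf, tsum_congr (fun n => by rw [φ_one, one_smul]), tsum_v]
  abel

end CurvesAux

end

open CurvesAux

/-- There is a countable family of line segments in ℝ³ whose union `A` has Hausdorff
dimension `1`, together with a family of rectifiable curves contained in `A`, each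
converging to a limit point, such that the set of limit points covers
`[0,1] × [0,1] × {0}`, a set of Hausdorff dimension `2`. Hence extending rectifiable
curves by their limit points can raise the Hausdorff dimension from `1` to `2`. -/
theorem curves_extension_raises_dimension :
    ∃ (s : ℕ → (ℝ × ℝ × ℝ) × (ℝ × ℝ × ℝ)) (ι : Type) (γ : ι → ℝ → ℝ × ℝ × ℝ)
      (lim : ι → ℝ × ℝ × ℝ),
      (∀ k, (s k).1 ≠ (s k).2) ∧
      dimH (⋃ k, segment ℝ (s k).1 (s k).2) = 1 ∧
      (∀ i, ∀ t ∈ Ico (0 : ℝ) 1, γ i t ∈ ⋃ k, segment ℝ (s k).1 (s k).2) ∧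
      (∀ i, ContinuousOn (γ i) (Ico (0 : ℝ) 1)) ∧
      (∀ i, eVariationOn (γ i) (Ico (0 : ℝ) 1) < ⊤) ∧
      (∀ i, Tendsto (γ i) (nhdsWithin 1 (Ico (0 : ℝ) 1)) (nhds (lim i))) ∧
      (Icc (0 : ℝ) 1 ×ˢ Icc (0 : ℝ) 1 ×ˢ {(0 : ℝ)}) ⊆ Set.range lim ∧
      dimH ((Icc (0 : ℝ) 1 ×ˢ Icc (0 : ℝ) 1 ×ˢ {(0 : ℝ)}) : Set (ℝ × ℝ × ℝ)) = 2 := by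
  refine ⟨seg, ℝ × ℝ, γf, fun i => (pj i.1, pj i.2, 0), ?_, ?_, ?_, ?_, ?_, ?_, ?_, ?_⟩
  · -- nondegenerate segments
    intro k hEq
    rcases hq : (Denumerable.eqv (ℕ × ℕ × ℕ × ℕ × ℕ)).symm k with ⟨n, a, b, a', b'⟩
    rw [seg, hq] at hEq
    have h3 := congrArg (fun p : ℝ × ℝ × ℝ => p.2.2) hEq
    simp only [F] at h3
    have hlt : ((2:ℝ)⁻¹) ^ (n+1) < ((2:ℝ)⁻¹) ^ n :=
      pow_lt_pow_right_of_lt_one₀ (by norm_num) (by norm_num) (Nat.lt_succ_self n)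
    exact hlt.ne (h3.symm)
  · -- dimH A = 1
    apply le_antisymm
    · rw [dimH_iUnion]
      refine iSup_le fun k => ?_
      set x := (seg k).1
      set y := (seg k).2
      have hseg : segment ℝ x y = (fun θ : ℝ => x + θ • (y - x)) '' Icc 0 1 :=
        segment_eq_image' ℝ x y
      have lip : LipschitzWith ‖y - x‖₊ (fun θ : ℝ => x + θ • (y - x)) := by
        apply LipschitzWith.of_dist_le_mul
        intro p q
        rw [dist_eq_norm, Real.dist_eq]
        have he : x + p • (y - x) - (x + q • (y - x)) = (p - q) • (y - x) := by
          rw [sub_smul]; abel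
        rw [he, norm_smul, Real.norm_eq_abs, coe_nnnorm, mul_comm]
      calc dimH (segment ℝ x y) = dimH ((fun θ : ℝ => x + θ • (y - x)) '' Icc 0 1) := by
            rw [hseg]
        _ ≤ dimH (Icc (0:ℝ) 1) := lip.dimH_image_le _
        _ ≤ dimH (univ : Set ℝ) := dimH_mono (subset_univ _)
        _ = 1 := Real.dimH_univ
    · have hiso : Isometry (fun z : ℝ => ((0:ℝ), (0:ℝ), z)) := by
        apply Isometry.of_dist_eq
        intro a b
        rw [Prod.dist_eq, Prod.dist_eq, dist_self, max_eq_right dist_nonneg,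
          max_eq_right dist_nonneg]
      have hsub : (fun z : ℝ => ((0:ℝ), (0:ℝ), z)) '' Icc (2⁻¹ : ℝ) 1 ⊆
          ⋃ k, segment ℝ (seg k).1 (seg k).2 := by
        rintro _ ⟨z, hz, rfl⟩
        refine mem_iUnion.2 ⟨(Denumerable.eqv (ℕ × ℕ × ℕ × ℕ × ℕ)) (0, 0, 0, 0, 0), ?_⟩
        rw [seg_eqv]
        refine ⟨2*z - 1, 2 - 2*z, by linarith [hz.1], by linarith [hz.2], by ring, ?_⟩
        simp only [F, Nat.cast_zero, zero_div, pow_zero, pow_one, Prod.smul_mk,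
          Prod.mk_add_mk, smul_eq_mul, mul_zero, add_zero, Prod.mk.injEq]
        refine ⟨trivial, trivial, by ring⟩
      have h1 : dimH ((fun z : ℝ => ((0:ℝ), (0:ℝ), z)) '' Icc (2⁻¹ : ℝ) 1) = 1 := by
        rw [hiso.dimH_image]
        rw [Real.dimH_of_mem_nhds (x := (3/4 : ℝ))
          (Icc_mem_nhds (by norm_num) (by norm_num))]
        simp [Module.finrank_self]
      calc (1 : ENNReal) = dimH ((fun z : ℝ => ((0:ℝ), (0:ℝ), z)) '' Icc (2⁻¹ : ℝ) 1) := h1.symm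
        _ ≤ dimH (⋃ k, segment ℝ (seg k).1 (seg k).2) := dimH_mono hsub
  · -- membership
    intro i t ht
    obtain ⟨ht0, ht1⟩ := ht
    set N := ⌊t/(1-t)⌋₊
    refine mem_iUnion.2 ⟨(Denumerable.eqv (ℕ × ℕ × ℕ × ℕ × ℕ))
      (N, ⌊(2:ℝ)^N * pj i.1⌋₊, ⌊(2:ℝ)^N * pj i.2⌋₊,
        ⌊(2:ℝ)^(N+1) * pj i.1⌋₊, ⌊(2:ℝ)^(N+1) * pj i.2⌋₊), ?_⟩
    rw [seg_eqv]
    rw [← P_eq_F_fst N i _ _, ← P_eq_F_snd N i _ _]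
    exact γ_mem_segment i ht0 ht1
  · -- continuity
    exact fun i => (γ_lipschitz i).continuous.continuousOn
  · -- bounded variation
    intro i
    have h := ((γ_lipschitz i).lipschitzOnWith (s := univ)).comp_eVariationOn_le
      (g := id) (s := Ico (0:ℝ) 1) (mapsTo_univ _ _)
    have hmono : MonotoneOn (id : ℝ → ℝ) (Icc 0 1) := fun x _ y _ h => h
    have hid : eVariationOn (id : ℝ → ℝ) (Ico (0:ℝ) 1) ≤ ENNReal.ofReal 1 := by
      have h2 := hmono.eVariationOn_le (a := 0) (b := 1)
        (left_mem_Icc.2 zero_le_one) (right_mem_Icc.2 zero_le_one)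
      refine le_trans (eVariationOn.mono _ ?_) (le_trans h2 ?_)
      · rw [inter_self]; exact Ico_subset_Icc_self
      · norm_num
    have hfin : ((∑' n, w n).toNNReal : ENNReal) * ENNReal.ofReal 1 < ⊤ :=
      ENNReal.mul_lt_top ENNReal.coe_lt_top ENNReal.ofReal_lt_top
    exact lt_of_le_of_lt (le_trans h (mul_le_mul_right hid _)) hfin
  · -- limit
    intro i
    have h : Tendsto (γf i) (nhdsWithin 1 (Ico (0:ℝ) 1)) (nhds (γf i 1)) :=
      ((γ_lipschitz i).continuous.tendsto 1).mono_left nhdsWithin_le_nhds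
    rwa [γ_one] at h
  · -- covers the square
    rintro ⟨x, y, z⟩ hp
    simp only [mem_prod, mem_Icc, mem_singleton_iff] at hp
    obtain ⟨⟨hx0, hx1⟩, ⟨hy0, hy1⟩, hz⟩ := hp
    exact ⟨(x, y), by simp [pj_eq hx0 hx1, pj_eq hy0 hy1, hz]⟩
  · -- dimension of the square
    have hiso : Isometry (fun p : ℝ × ℝ => (p.1, p.2, (0:ℝ))) := by
      apply Isometry.of_dist_eq
      intro p q
      simp only [Prod.dist_eq, dist_self, max_eq_left dist_nonneg]
    have him : (Icc (0:ℝ) 1 ×ˢ Icc (0:ℝ) 1 ×ˢ {(0:ℝ)}) =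
        (fun p : ℝ × ℝ => (p.1, p.2, (0:ℝ))) '' (Icc 0 1 ×ˢ Icc 0 1) := by
      ext ⟨x, y, z⟩
      simp only [mem_prod, mem_singleton_iff, mem_image, Prod.mk.injEq, Prod.exists]
      constructor
      · rintro ⟨hx, hy, hz⟩
        exact ⟨x, y, ⟨hx, hy⟩, rfl, rfl, hz.symm⟩
      · rintro ⟨a, b, ⟨ha, hb⟩, rfl, rfl, rfl⟩
        exact ⟨ha, hb, rfl⟩
    rw [him, hiso.dimH_image]
    rw [Real.dimH_of_mem_nhds (x := ((2⁻¹ : ℝ), (2⁻¹ : ℝ)))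
      (prod_mem_nhds (Icc_mem_nhds (by norm_num) (by norm_num))
        (Icc_mem_nhds (by norm_num) (by norm_num)))]
    rw [Module.finrank_prod, Module.finrank_self]
    norm_num
end
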